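/- arXiv:2508.11881 — 5 statements merged into one kernel-verified Lean document; each statement's English description precedes it below -/
import Mathlib

section
/- Let (X, ℬ, ν) be a probability space and {E_n}_{n≥1} a sequence of measurable sets with ∑_{n=1}^∞ ν(E_n) = ∞ and ν(E_i ∩ E_j) ≤ c · ν(E_i) ν(E_j) for all i ≠ j with i, j > L, where c ≥ 1 and L are constants. Then ν(limsup_{n→∞} E_n) ≥ 1/c. -/
open MeasureTheory Filter Set
open scoped ENNReal

set_option maxHeartbeats 1000000

theorem stmt_4 {X : Type*} [MeasurableSpace X] (ν : Measure X) [IsProbabilityMeasure ν]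
    (E : ℕ → Set X) (hE : ∀ n, MeasurableSet (E n)) (c : ℝ) (hc : 1 ≤ c) (L : ℕ)
    (hdiv : ∑' n, ν (E n) = ⊤)
    (hquasi : ∀ i j, L < i → L < j → i ≠ j →
      ν (E i ∩ E j) ≤ ENNReal.ofReal c * ν (E i) * ν (E j)) :
    ENNReal.ofReal (1 / c) ≤ ν (limsup E atTop) := by
  have hc0 : (0:ℝ) < c := lt_of_lt_of_le one_pos hc
  set c' : ℝ≥0∞ := ENNReal.ofReal c with hc'def
  have hc'top : c' ≠ ⊤ := ENNReal.ofReal_ne_top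
  set U : ℕ → Set X := fun m => ⋃ k, ⋃ (_ : m ≤ k), E k with hUdef
  have hUmeas : ∀ m, MeasurableSet (U m) := fun m =>
    MeasurableSet.iUnion fun k => MeasurableSet.iUnion fun _ => hE k
  have hUanti : Antitone U := fun p q hpq => Set.iUnion₂_subset fun k hk =>
    Set.subset_iUnion₂ (s := fun k _ => E k) k (hpq.trans hk)
  -- the key estimate for tails starting past `L`
  have key : ∀ m, L < m → ENNReal.ofReal (1 / c) ≤ ν (U m) := by
    intro m hm
    by_contra hcon
    push_neg at hcon
    have hUfin : ν (U m) ≠ ⊤ := measure_ne_top ν _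
    set a : ℝ := (ν (U m)).toReal with hadef
    have ha0 : 0 ≤ a := ENNReal.toReal_nonneg
    have hac : a < 1 / c := by
      have h := ENNReal.toReal_strict_mono ENNReal.ofReal_ne_top hcon
      rwa [ENNReal.toReal_ofReal (by positivity)] at h
    have hac1 : a * c < 1 := (lt_div_iff₀ hc0).mp hac
    set T : ℕ → ℝ≥0∞ := fun n => ∑ k ∈ Finset.Ico m n, ν (E k) with hTdef
    have hTfin : ∀ n, T n ≠ ⊤ := by
      intro n
      refine (lt_of_le_of_lt (Finset.sum_le_sum fun k _ => prob_le_one)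
        ?_).ne
      simp only [Finset.sum_const, nsmul_eq_mul, mul_one]
      exact ENNReal.natCast_lt_top _
    -- main inequality for each n
    have hmain : ∀ n, T n * T n ≤ (T n + c' * (T n * T n)) * ν (U m) := by
      intro n
      set s : Finset ℕ := Finset.Ico m n with hsdef
      set f : X → ℝ≥0∞ := fun x => ∑ k ∈ s, (E k).indicator 1 x with hfdef
      have hfmeas : Measurable f :=
        Finset.measurable_sum _ fun k _ => measurable_one.indicator (hE k)
      have hintf : ∫⁻ x, f x ∂ν = T n := by
        rw [hfdef]
        rw [lintegral_finset_sum _ fun k _ => measurable_one.indicator (hE k)]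
        exact Finset.sum_congr rfl fun k _ => lintegral_indicator_one (hE k)
      have hintf2 : ∫⁻ x, f x * f x ∂ν = ∑ i ∈ s, ∑ j ∈ s, ν (E i ∩ E j) := by
        have hpt : ∀ x, f x * f x = ∑ i ∈ s, ∑ j ∈ s, (E i ∩ E j).indicator 1 x := by
          intro x
          rw [hfdef, Finset.sum_mul]
          refine Finset.sum_congr rfl fun i _ => ?_
          rw [Finset.mul_sum]
          refine Finset.sum_congr rfl fun j _ => ?_
          rw [Set.inter_indicator_one]
          rfl
        simp_rw [hpt]
        rw [lintegral_finset_sum _ fun i _ => Finset.measurable_sum _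
          fun j _ => measurable_one.indicator ((hE i).inter (hE j))]
        refine Finset.sum_congr rfl fun i _ => ?_
        rw [lintegral_finset_sum _ fun j _ => measurable_one.indicator ((hE i).inter (hE j))]
        exact Finset.sum_congr rfl fun j _ => lintegral_indicator_one ((hE i).inter (hE j))
      have hA : ∑ i ∈ s, ∑ j ∈ s, ν (E i ∩ E j) ≤ T n + c' * (T n * T n) := by
        have step1 : ∑ i ∈ s, ∑ j ∈ s, ν (E i ∩ E j) ≤
            ∑ i ∈ s, ∑ j ∈ s, ((if i = j then ν (E i) else 0) + c' * ν (E i) * ν (E j)) := by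
          refine Finset.sum_le_sum fun i hi => Finset.sum_le_sum fun j hj => ?_
          by_cases hij : i = j
          · subst hij
            simp only [if_pos rfl, Set.inter_self]
            exact le_self_add
          · simp only [if_neg hij, zero_add]
            exact hquasi i j (lt_of_lt_of_le hm (Finset.mem_Ico.mp hi).1)
              (lt_of_lt_of_le hm (Finset.mem_Ico.mp hj).1) hij
        refine step1.trans (le_of_eq ?_)
        have hsplit2 : ∑ i ∈ s, ∑ j ∈ s,
            ((if i = j then ν (E i) else 0) + c' * ν (E i) * ν (E j))
            = (∑ i ∈ s, ∑ j ∈ s, (if i = j then ν (E i) else 0))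
              + ∑ i ∈ s, ∑ j ∈ s, c' * ν (E i) * ν (E j) := by
          rw [← Finset.sum_add_distrib]
          exact Finset.sum_congr rfl fun i _ => Finset.sum_add_distrib
        have hdiag : ∑ i ∈ s, ∑ j ∈ s, (if i = j then ν (E i) else 0) = T n := by
          have hptd : ∀ i ∈ s, ∑ j ∈ s, (if i = j then ν (E i) else 0) = ν (E i) :=
            fun i hi => by simp [hi]
          rw [Finset.sum_congr rfl hptd]
        have hoff : ∑ i ∈ s, ∑ j ∈ s, c' * ν (E i) * ν (E j) = c' * (T n * T n) := by
          calc ∑ i ∈ s, ∑ j ∈ s, c' * ν (E i) * ν (E j)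
              = ∑ i ∈ s, c' * ν (E i) * ∑ j ∈ s, ν (E j) :=
                Finset.sum_congr rfl fun i _ => (Finset.mul_sum _ _ _).symm
            _ = c' * (T n * T n) := by
                rw [← Finset.sum_mul, ← Finset.mul_sum, mul_assoc]
        rw [hsplit2, hdiag, hoff]
      -- Cauchy-Schwarz
      set V : Set X := ⋃ k ∈ s, E k with hVdef
      have hVmeas : MeasurableSet V :=
        s.measurableSet_biUnion fun k _ => hE k
      set g : X → ℝ≥0∞ := V.indicator 1 with hgdef
      have hgmeas : Measurable g := measurable_one.indicator hVmeas
      have hfg : ∀ x, f x = f x * g x := by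
        intro x
        by_cases hx : x ∈ V
        · simp [hgdef, hx]
        · have hf0 : f x = 0 := by
            refine Finset.sum_eq_zero fun k hk => ?_
            exact Set.indicator_of_notMem (fun hxk => hx (Set.mem_biUnion hk hxk)) _
          simp [hf0]
      have hconj : Real.HolderConjugate 2 2 := Real.HolderConjugate.two_two
      have hCS := ENNReal.lintegral_mul_le_Lp_mul_Lq ν hconj hfmeas.aemeasurable
        hgmeas.aemeasurable
      have hg2 : ∀ x, g x ^ (2:ℝ) = g x := by
        intro x
        by_cases hx : x ∈ V <;> simp [hgdef, hx, ENNReal.zero_rpow_of_pos]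
      have hf2 : ∀ x, f x ^ (2:ℝ) = f x * f x := by
        intro x
        rw [show (2:ℝ) = ((2:ℕ):ℝ) by norm_num, ENNReal.rpow_natCast, sq]
      have hintg : ∫⁻ x, g x ∂ν = ν V := lintegral_indicator_one hVmeas
      have hCS' : T n ≤ (∑ i ∈ s, ∑ j ∈ s, ν (E i ∩ E j)) ^ (1/2:ℝ) * (ν V) ^ (1/2:ℝ) := by
        calc T n = ∫⁻ x, f x ∂ν := hintf.symm
          _ = ∫⁻ x, (f * g) x ∂ν := lintegral_congr fun x => hfg x
          _ ≤ (∫⁻ x, f x ^ (2:ℝ) ∂ν) ^ (1/2:ℝ) * (∫⁻ x, g x ^ (2:ℝ) ∂ν) ^ (1/2:ℝ) := hCS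
          _ = (∑ i ∈ s, ∑ j ∈ s, ν (E i ∩ E j)) ^ (1/2:ℝ) * (ν V) ^ (1/2:ℝ) := by
              rw [lintegral_congr hf2, lintegral_congr hg2, hintf2, hintg]
      have hsqhalf : ∀ A : ℝ≥0∞, A ^ (1/2:ℝ) * A ^ (1/2:ℝ) = A := by
        intro A
        rw [← ENNReal.rpow_add_of_nonneg _ _ (by norm_num) (by norm_num)]
        norm_num
      have hVU : ν V ≤ ν (U m) := by
        refine measure_mono ?_
        rw [hVdef]
        exact Set.iUnion₂_subset fun k hk =>
          Set.subset_iUnion₂ (s := fun k _ => E k) k (Finset.mem_Ico.mp hk).1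
      calc T n * T n
          ≤ ((∑ i ∈ s, ∑ j ∈ s, ν (E i ∩ E j)) ^ (1/2:ℝ) * (ν V) ^ (1/2:ℝ)) *
            ((∑ i ∈ s, ∑ j ∈ s, ν (E i ∩ E j)) ^ (1/2:ℝ) * (ν V) ^ (1/2:ℝ)) :=
            mul_le_mul' hCS' hCS'
        _ = (∑ i ∈ s, ∑ j ∈ s, ν (E i ∩ E j)) * ν V := by
            rw [mul_mul_mul_comm, hsqhalf, hsqhalf]
        _ ≤ (T n + c' * (T n * T n)) * ν (U m) := mul_le_mul' hA hVU
    -- pass to real numbers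
    have hre : ∀ n, (T n).toReal * (T n).toReal ≤
        ((T n).toReal + c * ((T n).toReal * (T n).toReal)) * a := by
      intro n
      have hrhsfin : (T n + c' * (T n * T n)) * ν (U m) ≠ ⊤ :=
        ENNReal.mul_ne_top (ENNReal.add_ne_top.mpr ⟨hTfin n,
          ENNReal.mul_ne_top hc'top (ENNReal.mul_ne_top (hTfin n) (hTfin n))⟩) hUfin
      have h2 := ENNReal.toReal_mono hrhsfin (hmain n)
      rw [ENNReal.toReal_mul, ENNReal.toReal_mul,
        ENNReal.toReal_add (hTfin n)
          (ENNReal.mul_ne_top hc'top (ENNReal.mul_ne_top (hTfin n) (hTfin n))),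
        ENNReal.toReal_mul, ENNReal.toReal_mul, hc'def,
        ENNReal.toReal_ofReal hc0.le] at h2
      exact h2
    -- T n is unbounded
    have hunb' : ∀ M : ℝ≥0∞, M ≠ ⊤ → ∃ n, M < T n := by
      intro M hM
      have h1 : M + m < ∑' k, ν (E k) := by
        rw [hdiv]
        exact ENNReal.add_lt_top.mpr ⟨hM.lt_top, ENNReal.natCast_lt_top m⟩
      rw [ENNReal.tsum_eq_iSup_sum] at h1
      obtain ⟨F, hF⟩ := lt_iSup_iff.mp h1
      obtain ⟨n0, hFn⟩ := F.exists_nat_subset_range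
      set N : ℕ := max n0 m with hNdef
      refine ⟨N, ?_⟩
      have h2 : ∑ k ∈ F, ν (E k) ≤ ∑ k ∈ Finset.range N, ν (E k) :=
        Finset.sum_le_sum_of_subset
          (hFn.trans (Finset.range_subset_range.mpr (le_max_left _ _)))
      have h3 : ∑ k ∈ Finset.range N, ν (E k)
          = ∑ k ∈ Finset.range m, ν (E k) + T N := by
        rw [hTdef, Finset.range_eq_Ico,
          ← Finset.sum_Ico_consecutive _ (Nat.zero_le m) (le_max_right n0 m), ← Finset.range_eq_Ico]
      have hhead : ∑ k ∈ Finset.range m, ν (E k) ≤ (m : ℝ≥0∞) := by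
        calc ∑ k ∈ Finset.range m, ν (E k) ≤ ∑ _k ∈ Finset.range m, 1 :=
              Finset.sum_le_sum fun k _ => prob_le_one
          _ = (m : ℝ≥0∞) := by simp
      have h4 : M + (m : ℝ≥0∞) < (m : ℝ≥0∞) + T N := by
        calc M + (m : ℝ≥0∞) < ∑ k ∈ F, ν (E k) := hF
          _ ≤ ∑ k ∈ Finset.range m, ν (E k) + T N := h3 ▸ h2
          _ ≤ (m : ℝ≥0∞) + T N := add_le_add_left hhead _
      rw [add_comm M] at h4
      exact (ENNReal.add_lt_add_iff_left (ENNReal.natCast_ne_top m)).mp h4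
    have hunb : ∀ M : ℝ, ∃ n, M < (T n).toReal := by
      intro M
      obtain ⟨n0, hn0⟩ := hunb' (ENNReal.ofReal M) ENNReal.ofReal_ne_top
      refine ⟨n0, ?_⟩
      have h4 := ENNReal.toReal_strict_mono (hTfin n0) hn0
      calc M ≤ max M 0 := le_max_left _ _
        _ = (ENNReal.ofReal M).toReal := ENNReal.toReal_ofReal'.symm
        _ < (T n0).toReal := h4
    obtain ⟨n, hn⟩ := hunb (max (a / (1 - a * c)) 0)
    set t : ℝ := (T n).toReal with htdef
    have ht0 : 0 < t := lt_of_le_of_lt (le_max_right _ _) hn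
    have ht1 : a / (1 - a * c) < t := lt_of_le_of_lt (le_max_left _ _) hn
    have h1ac : 0 < 1 - a * c := by linarith
    have ha_lt : a < t * (1 - a * c) := (div_lt_iff₀ h1ac).mp ht1
    have hren := hre n
    nlinarith [mul_lt_mul_of_pos_right ha_lt ht0, hren, mul_pos ht0 ht0]
  -- conclude
  have hls : limsup E atTop = ⋂ m, U m := by
    rw [limsup_eq_iInf_iSup_of_nat]
    rfl
  rw [hls, hUanti.measure_iInter (fun m => (hUmeas m).nullMeasurableSet)
    ⟨0, measure_ne_top ν _⟩]
  refine le_iInf fun m => ?_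
  calc ENNReal.ofReal (1/c) ≤ ν (U (max m (L+1))) :=
        key _ (lt_of_lt_of_le (Nat.lt_succ_self L) (le_max_right _ _))
    _ ≤ ν (U m) := measure_mono (hUanti (le_max_left _ _))
end

section
/- Let ψ : ℕ → ℝ⁺ be a non-decreasing function tending to infinity with ∑_{n=1}^∞ n^{r−1} ψ(n)^{−r} = ∞ for some integer r ≥ 1. Then there exists a non-decreasing function φ : ℕ → ℝ⁺ with φ(n) ≥ ψ(n) for all n, such that n/φ(n) → 0 as n → ∞ and ∑_{n=1}^∞ n^{r−1} φ(n)^{−r} = ∞. -/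
open Filter Finset

private lemma aux_pow_sub_pow_le {x y : ℝ} (hy : 0 ≤ y) (hxy : y ≤ x) (r : ℕ) :
    x ^ r - y ^ r ≤ r * x ^ (r - 1) * (x - y) := by
  rw [← geom_sum₂_mul x y r]
  have hx : 0 ≤ x := hy.trans hxy
  have h : ∑ i ∈ range r, x ^ i * y ^ (r - 1 - i) ≤ r * x ^ (r - 1) := by
    calc ∑ i ∈ range r, x ^ i * y ^ (r - 1 - i) ≤ ∑ _i ∈ range r, x ^ (r - 1) := by
          apply Finset.sum_le_sum
          intro i hi
          have hi' := Finset.mem_range.mp hi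
          calc x ^ i * y ^ (r - 1 - i) ≤ x ^ i * x ^ (r - 1 - i) :=
                mul_le_mul_of_nonneg_left (pow_le_pow_left₀ hy hxy _) (pow_nonneg hx i)
            _ = x ^ (i + (r - 1 - i)) := (pow_add x i _).symm
            _ = x ^ (r - 1) := by congr 1; omega
      _ = r * x ^ (r - 1) := by
          rw [Finset.sum_const, card_range, nsmul_eq_mul]
  exact mul_le_mul_of_nonneg_right h (by linarith)

private lemma aux_pow_le_mul_sum (r : ℕ) (hr : 1 ≤ r) (n : ℕ) :
    (n : ℝ) ^ r ≤ r * ∑ i ∈ range (n + 1), (i : ℝ) ^ (r - 1) := by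
  induction n with
  | zero =>
      have : ((0:ℕ):ℝ) ^ r = 0 := by
        rw [Nat.cast_zero, zero_pow (by omega : r ≠ 0)]
      rw [this]
      apply mul_nonneg (by positivity)
      exact Finset.sum_nonneg fun i _ => by positivity
  | succ n ih =>
      rw [Finset.sum_range_succ, mul_add]
      have key : ((n:ℝ)+1) ^ r - (n:ℝ) ^ r ≤ r * ((n:ℝ)+1) ^ (r-1) * (((n:ℝ)+1) - n) :=
        aux_pow_sub_pow_le (n.cast_nonneg) (by linarith) r
      push_cast
      push_cast at ih
      nlinarith [key]

theorem stmt_5 (r : ℕ) (hr : 1 ≤ r) (ψ : ℕ → ℝ) (hpos : ∀ n, 0 < ψ n)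
    (hmono : Monotone ψ) (htend : Tendsto ψ atTop atTop)
    (hdiv : ¬ Summable (fun n : ℕ => (n : ℝ) ^ (r - 1) / ψ n ^ r)) :
    ∃ φ : ℕ → ℝ, (∀ n, 0 < φ n) ∧ Monotone φ ∧ (∀ n, ψ n ≤ φ n) ∧
      Tendsto (fun n : ℕ => (n : ℝ) / φ n) atTop (nhds 0) ∧
      ¬ Summable (fun n : ℕ => (n : ℝ) ^ (r - 1) / φ n ^ r) := by
  classical
  have hrpos : 0 < r := hr
  have hrR : (0:ℝ) < (r:ℝ) := by exact_mod_cast hrpos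
  have hrne : (r:ℝ) ≠ 0 := hrR.ne'
  set a : ℕ → ℝ := fun n => (n : ℝ) ^ (r - 1) / ψ n ^ r with ha_def
  have ha_nonneg : ∀ n, 0 ≤ a n := fun n => div_nonneg (by positivity) (pow_nonneg (hpos n).le r)
  set S : ℕ → ℝ := fun n => ∑ i ∈ range n, a i with hS_def
  have hS_mono : Monotone S := fun m n h =>
    Finset.sum_le_sum_of_subset_of_nonneg (Finset.range_subset_range.mpr h) (fun i _ _ => ha_nonneg i)
  set T : ℕ → ℝ := fun n => 1 + S n with hT_def
  have hT_mono : Monotone T := fun m n h => by dsimp only [T]; linarith [hS_mono h]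
  have hT_one : ∀ n, 1 ≤ T n := fun n => by
    have : 0 ≤ S n := Finset.sum_nonneg fun i _ => ha_nonneg i
    dsimp only [T]; linarith
  have hT_pos : ∀ n, 0 < T n := fun n => lt_of_lt_of_le one_pos (hT_one n)
  have hS_top : Tendsto S atTop atTop :=
    (not_summable_iff_tendsto_nat_atTop_of_nonneg ha_nonneg).mp hdiv
  have hT_top : Tendsto T atTop atTop := by
    dsimp only [T]; exact tendsto_atTop_add_const_left atTop 1 hS_top
  -- blocks
  have key : ∀ m : ℕ, ∃ M, m < M ∧ 2 * T m ≤ T M := by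
    intro m
    obtain ⟨M, h1, h2⟩ := ((hT_top.eventually_ge_atTop (2 * T m)).and (eventually_gt_atTop m)).exists
    exact ⟨M, h2, h1⟩
  let N : ℕ → ℕ := fun k => Nat.rec (motive := fun _ => ℕ) 0 (fun _ ih => (key ih).choose) k
  have hN0 : N 0 = 0 := rfl
  have hN_lt : ∀ k, N k < N (k + 1) := fun k => (key (N k)).choose_spec.1
  have hN_T : ∀ k, 2 * T (N k) ≤ T (N (k + 1)) := fun k => (key (N k)).choose_spec.2
  have hN_mono : StrictMono N := strictMono_nat_of_lt_succ hN_lt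
  have hN_le : ∀ k, k ≤ N k := fun k => hN_mono.le_apply
  let K : ℕ → ℕ := fun n => Nat.findGreatest (fun k => N k ≤ n) n
  have hK_ge : ∀ k n, N k ≤ n → k ≤ K n := fun k n h => Nat.le_findGreatest ((hN_le k).trans h) h
  have hK_spec : ∀ n, N (K n) ≤ n := fun n =>
    Nat.findGreatest_spec (P := fun k => N k ≤ n) (m := 0) (Nat.zero_le n) (by simp [hN0])
  have hK_mono : Monotone K := fun m n h =>
    Nat.le_findGreatest (((hN_le (K m)).trans (hK_spec m)).trans h) ((hK_spec m).trans h)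
  have hK_block : ∀ k n, N k ≤ n → n < N (k + 1) → K n = k := by
    intro k n h1 h2
    have hub : K n < k + 1 := by
      by_contra hcon
      push_neg at hcon
      have : N (k + 1) ≤ N (K n) := hN_mono.monotone hcon
      have := this.trans (hK_spec n)
      omega
    have := hK_ge k n h1
    omega
  have hK_top : Tendsto K atTop atTop :=
    hK_mono.tendsto_atTop_atTop fun b => ⟨N b, hK_ge b (N b) le_rfl⟩
  -- the function
  set X : ℕ → ℝ := fun n => ((K n : ℝ) + 1) * r * T (n + 1) with hX_def
  have hX_pos : ∀ n, 0 < X n := fun n => by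
    have hk : (0:ℝ) < (K n : ℝ) + 1 := by positivity
    exact mul_pos (mul_pos hk hrR) (hT_pos (n + 1))
  have hX_one : ∀ n, 1 ≤ X n := by
    intro n
    have h1 : (1:ℝ) ≤ (K n : ℝ) + 1 := by have := Nat.cast_nonneg (α := ℝ) (K n); linarith
    have h2 : (1:ℝ) ≤ (r:ℝ) := by exact_mod_cast hr
    calc (1:ℝ) = 1 * 1 * 1 := by ring
      _ ≤ ((K n : ℝ) + 1) * r * T (n + 1) :=
        mul_le_mul (mul_le_mul h1 h2 one_pos.le (by positivity)) (hT_one _) one_pos.le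
          (by positivity)
  have hX_mono : Monotone X := by
    intro m n h
    have h1 : ((K m : ℝ) + 1) ≤ ((K n : ℝ) + 1) := by
      have := hK_mono h; push_cast; linarith [(Nat.cast_le (α := ℝ)).mpr this]
    have h2 : T (m + 1) ≤ T (n + 1) := hT_mono (by omega)
    dsimp only [X]
    apply mul_le_mul (mul_le_mul_of_nonneg_right h1 hrR.le) h2 (hT_pos _).le
    positivity
  set φ : ℕ → ℝ := fun n => ψ n * X n ^ ((r:ℝ)⁻¹) with hφ_def
  have hφ_pos : ∀ n, 0 < φ n := fun n =>
    mul_pos (hpos n) (Real.rpow_pos_of_pos (hX_pos n) _)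
  have hφ_pow : ∀ n, φ n ^ r = ψ n ^ r * X n := by
    intro n
    dsimp only [φ]
    rw [mul_pow, ← Real.rpow_natCast (X n ^ ((r:ℝ)⁻¹)) r, ← Real.rpow_mul (hX_pos n).le,
      inv_mul_cancel₀ hrne, Real.rpow_one]
  have hφ_mono : Monotone φ := by
    intro m n h
    apply mul_le_mul (hmono h) (Real.rpow_le_rpow (hX_pos m).le (hX_mono h) (by positivity))
      (Real.rpow_pos_of_pos (hX_pos m) _).le (hpos n).le
  have hφ_ge : ∀ n, ψ n ≤ φ n := by
    intro n
    have : (1:ℝ) ≤ X n ^ ((r:ℝ)⁻¹) := Real.one_le_rpow (hX_one n) (by positivity)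
    calc ψ n = ψ n * 1 := (mul_one _).symm
      _ ≤ φ n := mul_le_mul_of_nonneg_left this (hpos n).le
  -- key lower bound on S
  have hS_lb : ∀ n : ℕ, (n:ℝ) ^ r ≤ ψ n ^ r * ((r:ℝ) * S (n + 1)) := by
    intro n
    have h1 : (∑ i ∈ range (n + 1), (i : ℝ) ^ (r - 1)) / ψ n ^ r ≤ S (n + 1) := by
      rw [Finset.sum_div]
      apply Finset.sum_le_sum
      intro i hi
      apply div_le_div_of_nonneg_left (by positivity) (pow_pos (hpos i) r)
      exact pow_le_pow_left₀ (hpos i).le (hmono (by { have := Finset.mem_range.mp hi; omega })) r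
    have h2 := aux_pow_le_mul_sum r hr n
    have hψ : (0:ℝ) < ψ n ^ r := pow_pos (hpos n) r
    rw [div_le_iff₀ hψ] at h1
    calc (n:ℝ) ^ r ≤ r * ∑ i ∈ range (n + 1), (i : ℝ) ^ (r - 1) := h2
      _ ≤ r * (S (n + 1) * ψ n ^ r) := by
          apply mul_le_mul_of_nonneg_left h1 hrR.le
      _ = ψ n ^ r * ((r:ℝ) * S (n + 1)) := by ring
  -- tendsto zero
  have htendzero : Tendsto (fun n : ℕ => (n : ℝ) / φ n) atTop (nhds 0) := by
    have hu_nonneg : ∀ n : ℕ, 0 ≤ (n:ℝ) / φ n := fun n =>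
      div_nonneg n.cast_nonneg (hφ_pos n).le
    have hub : ∀ n : ℕ, 1 ≤ n → (n:ℝ) / φ n ≤ (((K n : ℝ) + 1)⁻¹) ^ ((r:ℝ)⁻¹) := by
      intro n hn
      have hn' : (0:ℝ) < (n:ℝ) := by exact_mod_cast hn
      have hkpos : (0:ℝ) < (K n : ℝ) + 1 := by positivity
      have hur : ((n:ℝ) / φ n) ^ r ≤ ((K n : ℝ) + 1)⁻¹ := by
        rw [div_pow, hφ_pow n]
        have hbig : ((K n : ℝ) + 1) * (n:ℝ) ^ r ≤ ψ n ^ r * X n := by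
          have hS1 : S (n + 1) ≤ T (n + 1) := by dsimp only [T]; linarith
          calc ((K n : ℝ) + 1) * (n:ℝ) ^ r
              ≤ ((K n : ℝ) + 1) * (ψ n ^ r * ((r:ℝ) * S (n + 1))) :=
                mul_le_mul_of_nonneg_left (hS_lb n) hkpos.le
            _ ≤ ((K n : ℝ) + 1) * (ψ n ^ r * ((r:ℝ) * T (n + 1))) := by
                apply mul_le_mul_of_nonneg_left _ hkpos.le
                apply mul_le_mul_of_nonneg_left _ (pow_nonneg (hpos n).le r)
                exact mul_le_mul_of_nonneg_left hS1 hrR.le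
            _ = ψ n ^ r * X n := by dsimp only [X]; ring
        rw [div_le_iff₀ (mul_pos (pow_pos (hpos n) r) (hX_pos n))]
        calc (n:ℝ) ^ r = ((K n : ℝ) + 1)⁻¹ * (((K n : ℝ) + 1) * (n:ℝ) ^ r) := by
              field_simp
          _ ≤ ((K n : ℝ) + 1)⁻¹ * (ψ n ^ r * X n) :=
              mul_le_mul_of_nonneg_left hbig (by positivity)
      have : (n:ℝ) / φ n = (((n:ℝ) / φ n) ^ r) ^ ((r:ℝ)⁻¹) := by
        rw [← Real.rpow_natCast ((n:ℝ) / φ n) r, ← Real.rpow_mul (hu_nonneg n),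
          mul_inv_cancel₀ hrne, Real.rpow_one]
      rw [this]
      exact Real.rpow_le_rpow (pow_nonneg (hu_nonneg n) r) hur (by positivity)
    have hbound : Tendsto (fun n : ℕ => (((K n : ℝ) + 1)⁻¹) ^ ((r:ℝ)⁻¹)) atTop (nhds 0) := by
      have h1 : Tendsto (fun n : ℕ => (K n : ℝ) + 1) atTop atTop :=
        tendsto_atTop_add_const_right atTop 1 (tendsto_natCast_atTop_atTop.comp hK_top)
      have h2 : Tendsto (fun n : ℕ => ((K n : ℝ) + 1)⁻¹) atTop (nhds 0) :=
        tendsto_inv_atTop_zero.comp h1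
      have h3 := h2.rpow_const (p := (r:ℝ)⁻¹) (Or.inr (by positivity))
      rwa [Real.zero_rpow (inv_ne_zero hrne)] at h3
    apply tendsto_of_tendsto_of_tendsto_of_le_of_le' tendsto_const_nhds hbound
    · exact Eventually.of_forall hu_nonneg
    · filter_upwards [eventually_ge_atTop 1] with n hn using hub n hn
  -- divergence
  have hf_eq : ∀ n : ℕ, (n : ℝ) ^ (r - 1) / φ n ^ r = a n / X n := by
    intro n
    rw [hφ_pow n, ha_def]
    rw [div_div]
  have hf_nonneg : ∀ n : ℕ, 0 ≤ a n / X n := fun n =>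
    div_nonneg (ha_nonneg n) (hX_pos n).le
  have hblock : ∀ k : ℕ, (1:ℝ) / (2 * r * ((k:ℝ) + 1)) ≤
      ∑ n ∈ Ico (N k) (N (k + 1)), a n / X n := by
    intro k
    set D : ℝ := ((k:ℝ) + 1) * r * T (N (k + 1)) with hD_def
    have hD_pos : 0 < D := by
      have hk : (0:ℝ) < (k:ℝ) + 1 := by positivity
      exact mul_pos (mul_pos hk hrR) (hT_pos (N (k + 1)))
    have hterm : ∀ n ∈ Ico (N k) (N (k + 1)), a n / D ≤ a n / X n := by
      intro n hn
      obtain ⟨h1, h2⟩ := Finset.mem_Ico.mp hn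
      have hK_eq : K n = k := hK_block k n h1 h2
      have hXD : X n ≤ D := by
        dsimp only [X, D]
        rw [hK_eq]
        exact mul_le_mul_of_nonneg_left (hT_mono (by omega)) (by positivity)
      exact div_le_div_of_nonneg_left (ha_nonneg n) (hX_pos n) hXD
    calc (1:ℝ) / (2 * r * ((k:ℝ) + 1))
        ≤ ∑ n ∈ Ico (N k) (N (k + 1)), a n / D := by
          rw [← Finset.sum_div, Finset.sum_Ico_eq_sub a (hN_lt k).le]
          have hST : ∑ i ∈ range (N (k+1)), a i - ∑ i ∈ range (N k), a i
              = T (N (k + 1)) - T (N k) := by dsimp only [T, S]; ring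
          rw [hST]
          have h1 := hN_T k
          have h2 := hT_one (N k)
          have h3 : (1:ℝ) ≤ (r:ℝ) := by exact_mod_cast hr
          have h4 : (0:ℝ) < (k:ℝ) + 1 := by positivity
          rw [div_le_div_iff₀ (mul_pos (mul_pos two_pos hrR) h4) hD_pos]
          dsimp only [D]
          nlinarith [hT_pos (N (k+1)), mul_pos h4 hrR]
      _ ≤ ∑ n ∈ Ico (N k) (N (k + 1)), a n / X n := Finset.sum_le_sum hterm
  have hpartial : ∀ Kk : ℕ, ∑ k ∈ range Kk, (1:ℝ) / (2 * r * ((k:ℝ) + 1)) ≤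
      ∑ n ∈ range (N Kk), a n / X n := by
    intro Kk
    induction Kk with
    | zero => simp [hN0]
    | succ m ih =>
        have hsplit : ∑ n ∈ range (N m), a n / X n + ∑ n ∈ Ico (N m) (N (m+1)), a n / X n
            = ∑ n ∈ range (N (m+1)), a n / X n := by
          rw [Finset.range_eq_Ico, Finset.range_eq_Ico]
          exact Finset.sum_Ico_consecutive _ (Nat.zero_le _) (hN_lt m).le
        rw [Finset.sum_range_succ, ← hsplit]
        exact add_le_add ih (hblock m)
  have hharm : ¬ Summable (fun k : ℕ => (1:ℝ) / (2 * r * ((k:ℝ) + 1))) := by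
    intro hsum
    have h1 : Summable (fun k : ℕ => (2 * (r:ℝ)) * ((1:ℝ) / (2 * r * ((k:ℝ) + 1)))) :=
      hsum.mul_left _
    have h2 : Summable (fun k : ℕ => (1:ℝ) / ((k:ℝ) + 1)) := by
      convert h1 using 2 with k
      field_simp
    have h3 : Summable (fun n : ℕ => (1:ℝ) / ((n:ℝ))) := by
      rw [← summable_nat_add_iff 1]
      convert h2 using 2 with k
      case e'_3 => rfl
      push_cast
      ring
    exact Real.not_summable_one_div_natCast h3
  have hharm_top : Tendsto (fun Kk : ℕ => ∑ k ∈ range Kk, (1:ℝ) / (2 * r * ((k:ℝ) + 1)))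
      atTop atTop := by
    refine (not_summable_iff_tendsto_nat_atTop_of_nonneg ?_).mp hharm
    intro k
    positivity
  have hP_top : Tendsto (fun n : ℕ => ∑ i ∈ range n, a i / X i) atTop atTop := by
    have hP_mono : Monotone (fun n : ℕ => ∑ i ∈ range n, a i / X i) := fun m n h =>
      Finset.sum_le_sum_of_subset_of_nonneg (Finset.range_subset_range.mpr h)
        (fun i _ _ => hf_nonneg i)
    apply tendsto_atTop_of_monotone_of_subseq hP_mono (φ := N) (l := atTop)
    exact tendsto_atTop_mono hpartial hharm_top
  have hdiv' : ¬ Summable (fun n : ℕ => (n : ℝ) ^ (r - 1) / φ n ^ r) := by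
    have : (fun n : ℕ => (n : ℝ) ^ (r - 1) / φ n ^ r) = fun n => a n / X n :=
      funext hf_eq
    rw [this]
    exact (not_summable_iff_tendsto_nat_atTop_of_nonneg hf_nonneg).mpr hP_top
  exact ⟨φ, hφ_pos, hφ_mono, hφ_ge, htendzero, hdiv'⟩
end

section
/- Let μ be the Gauss measure and A_n^k = {x ∈ [0,1) : a_k(x) ≥ ψ(n)} where ψ(n) ≥ 1. For any indices 1 ≤ k₁ < k₂, there exists an absolute constant K₂ (independent of n, k₁, k₂) such that μ(A_n^{k₁} ∩ A_n^{k₂}) ≤ K₂ · μ(A_n^1)². -/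
open MeasureTheory Filter Set

/-- The Gauss map. -/
noncomputable def gaussMap (x : ℝ) : ℝ := if x = 0 then 0 else 1 / x - ⌊(1 / x : ℝ)⌋

/-- The `k`-th partial quotient of the continued fraction expansion of `x` (for `k ≥ 1`). -/
noncomputable def cfa (k : ℕ) (x : ℝ) : ℕ := ⌊1 / (gaussMap^[k - 1] x)⌋₊

/-- The Gauss measure on `[0,1)`, with density `1/((1+x) log 2)` w.r.t. Lebesgue measure. -/
noncomputable def gaussμ : Measure ℝ :=
  (volume.restrict (Set.Ico (0 : ℝ) 1)).withDensity
    fun x => ENNReal.ofReal (1 / ((1 + x) * Real.log 2))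

/-- The set `A_n^k = {x ∈ [0,1) : a_k(x) ≥ ψ(n)}`. -/
noncomputable def Aset (ψ : ℕ → ℝ) (n k : ℕ) : Set ℝ :=
  {x ∈ Set.Ico (0 : ℝ) 1 | ψ n ≤ (cfa k x : ℝ)}

open scoped ENNReal NNReal

lemma measurable_gaussMap : Measurable gaussMap := by
  unfold gaussMap
  refine Measurable.ite (measurableSet_eq) measurable_const ?_
  have h1 : Measurable fun x : ℝ => 1 / x := measurable_const.div measurable_id
  have h2 : Measurable fun n : ℤ => (n : ℝ) := measurable_from_top
  exact h1.sub (h2.comp h1.floor)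

lemma gaussMap_mem_Ico {x : ℝ} (hx : x ∈ Ico (0:ℝ) 1) : gaussMap x ∈ Ico (0:ℝ) 1 := by
  rcases eq_or_lt_of_le hx.1 with h | h
  · simp [gaussMap, ← h]
  · have : gaussMap x = Int.fract (1/x) := by
      rw [gaussMap, if_neg (ne_of_gt h)]; rfl
    rw [this]
    exact ⟨Int.fract_nonneg _, Int.fract_lt_one _⟩

lemma gaussMap_iterate_mem_Ico {x : ℝ} (hx : x ∈ Ico (0:ℝ) 1) (k : ℕ) :
    gaussMap^[k] x ∈ Ico (0:ℝ) 1 := by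
  induction k with
  | zero => simpa
  | succ n ih => rw [Function.iterate_succ_apply']; exact gaussMap_mem_Ico ih

-- density bounds
lemma gauss_density_le (x : ℝ) (hx : 0 ≤ x) :
    ENNReal.ofReal (1 / ((1 + x) * Real.log 2)) ≤ ENNReal.ofReal 2 := by
  apply ENNReal.ofReal_le_ofReal
  rw [div_le_iff₀ (by positivity)]
  nlinarith [Real.log_two_gt_d9, Real.log_two_lt_d9]

lemma gauss_density_ge {x : ℝ} (hx0 : 0 ≤ x) (hx : x ≤ 1) :
    ENNReal.ofReal (1/2 : ℝ) ≤ ENNReal.ofReal (1 / ((1 + x) * Real.log 2)) := by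
  apply ENNReal.ofReal_le_ofReal
  rw [le_div_iff₀ (by nlinarith [Real.log_two_gt_d9])]
  nlinarith [Real.log_two_lt_d9]

lemma gaussμ_apply {s : Set ℝ} (hs : MeasurableSet s) :
    gaussμ s = ∫⁻ x in s ∩ Ico (0:ℝ) 1, ENNReal.ofReal (1 / ((1 + x) * Real.log 2)) := by
  rw [gaussμ, withDensity_apply _ hs, Measure.restrict_restrict hs]

lemma gaussμ_inter_Ico {s : Set ℝ} (hs : MeasurableSet s) :
    gaussμ (s ∩ Ico (0:ℝ) 1) = gaussμ s := by
  rw [gaussμ_apply (hs.inter measurableSet_Ico), gaussμ_apply hs, inter_assoc, inter_self]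

lemma gaussμ_Icc {u v : ℝ} (hu : 0 ≤ u) (huv : u ≤ v) (hv : v ≤ 1) :
    gaussμ (Icc u v) = ENNReal.ofReal ((Real.log (1+v) - Real.log (1+u)) / Real.log 2) := by
  rw [gaussμ_apply measurableSet_Icc]
  have hset : (Icc u v ∩ Ico (0:ℝ) 1 : Set ℝ) =ᵐ[volume] (Ioc u v : Set ℝ) := by
    rw [MeasureTheory.ae_eq_set]
    constructor
    · apply measure_mono_null (t := {u}) _ Real.volume_singleton
      rintro x ⟨⟨hicc, _⟩, hioc⟩
      simp only [mem_Icc] at hicc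
      simp only [mem_Ioc, not_and, not_le] at hioc
      simp only [mem_singleton_iff]
      rcases eq_or_lt_of_le hicc.1 with h | h
      · exact h.symm
      · linarith [hioc h]
    · apply measure_mono_null (t := {v}) _ Real.volume_singleton
      rintro x ⟨hioc, hn⟩
      simp only [mem_Ioc] at hioc
      simp only [mem_inter_iff, mem_Icc, mem_Ico, not_and, not_and_or, not_le, not_lt] at hn
      simp only [mem_singleton_iff]
      have h := hn ⟨hioc.1.le, hioc.2⟩ (hu.trans hioc.1.le)
      linarith [hioc.2.trans hv]
  rw [setLIntegral_congr hset]
  have hInt : IntegrableOn (fun x => 1 / ((1 + x) * Real.log 2)) (Ioc u v) volume := by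
    have hcont : ContinuousOn (fun x => 1 / ((1 + x) * Real.log 2)) (Icc u v) := by
      apply ContinuousOn.div continuousOn_const (by fun_prop)
      intro x hx
      have : (0:ℝ) ≤ x := hu.trans hx.1
      nlinarith [Real.log_two_gt_d9]
    exact (hcont.integrableOn_compact isCompact_Icc).mono_set Ioc_subset_Icc_self
  rw [← ofReal_integral_eq_lintegral_ofReal hInt]
  · congr 1
    rw [← intervalIntegral.integral_of_le huv]
    have : ∀ x : ℝ, 1 / ((1 + x) * Real.log 2) = (Real.log 2)⁻¹ * (1 + x)⁻¹ := by
      intro x; rw [one_div, mul_inv, mul_comm]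
    simp_rw [this, intervalIntegral.integral_const_mul]
    have hc : ∫ x in u..v, (1 + x)⁻¹ = Real.log (1+v) - Real.log (1+u) := by
      have := intervalIntegral.integral_comp_add_left (a := u) (b := v) (fun x => x⁻¹) 1
      rw [this, integral_inv_of_pos (by linarith) (by linarith),
        Real.log_div (by linarith) (by linarith)]
    rw [hc, div_eq_inv_mul]
  · filter_upwards [self_mem_ae_restrict measurableSet_Ioc] with x hx
    have : 0 ≤ x := hu.trans hx.1.le
    positivity

lemma gaussμ_le_two_vol {s : Set ℝ} (hs : MeasurableSet s) :
    gaussμ s ≤ 2 * volume (s ∩ Ico (0:ℝ) 1) := by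
  rw [gaussμ_apply hs]
  calc ∫⁻ x in s ∩ Ico (0:ℝ) 1, ENNReal.ofReal (1 / ((1 + x) * Real.log 2))
      ≤ ∫⁻ _ in s ∩ Ico (0:ℝ) 1, (2 : ℝ≥0∞) := by
        apply setLIntegral_mono' (hs.inter measurableSet_Ico)
        intro x hx
        simpa using gauss_density_le x hx.2.1
    _ = 2 * volume (s ∩ Ico (0:ℝ) 1) := by rw [setLIntegral_const, mul_comm]

lemma vol_le_two_gaussμ {s : Set ℝ} (hs : MeasurableSet s) :
    volume (s ∩ Ico (0:ℝ) 1) ≤ 2 * gaussμ s := by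
  rw [gaussμ_apply hs]
  calc volume (s ∩ Ico (0:ℝ) 1)
      = 2 * ∫⁻ _ in s ∩ Ico (0:ℝ) 1, ENNReal.ofReal (1/2 : ℝ) := by
        rw [setLIntegral_const]
        rw [show ENNReal.ofReal (1/2:ℝ) = 2⁻¹ by
          rw [ENNReal.ofReal_div_of_pos (by norm_num), ENNReal.ofReal_one,
            ENNReal.ofReal_ofNat, one_div]]
        rw [← mul_assoc, ENNReal.mul_inv_cancel (by norm_num) (by norm_num), one_mul]
    _ ≤ 2 * ∫⁻ x in s ∩ Ico (0:ℝ) 1, ENNReal.ofReal (1 / ((1 + x) * Real.log 2)) := by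
        refine mul_le_mul_right ?_ 2
        apply setLIntegral_mono' (hs.inter measurableSet_Ico)
        intro x hx
        exact gauss_density_ge hx.2.1 hx.2.2.le

instance gaussμ_finite : IsFiniteMeasure gaussμ := by
  constructor
  calc gaussμ univ ≤ 2 * volume (univ ∩ Ico (0:ℝ) 1) := gaussμ_le_two_vol MeasurableSet.univ
  _ = 2 * 1 := by rw [univ_inter, Real.volume_Ico]; norm_num
  _ < ⊤ := by norm_num

lemma gaussμ_congr {s s' : Set ℝ} (hs : MeasurableSet s) (hs' : MeasurableSet s')
    (h : s ∩ Ico (0:ℝ) 1 = s' ∩ Ico (0:ℝ) 1) : gaussμ s = gaussμ s' := by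
  rw [gaussμ_apply hs, gaussμ_apply hs', h]

lemma tendsto_dt (t : ℝ) (ht : 0 ≤ t) :
    Tendsto (fun n : ℕ => (Real.log ((n:ℝ)+1+t) - Real.log ((n:ℝ)+1)) / Real.log 2)
      atTop (nhds 0) := by
  have key : ∀ n : ℕ, Real.log ((n:ℝ)+1+t) - Real.log ((n:ℝ)+1)
      = Real.log (1 + t * (1/((n:ℝ)+1))) := by
    intro n
    have h1 : (0:ℝ) < (n:ℝ)+1 := by positivity
    rw [← Real.log_div (by positivity) (ne_of_gt h1)]
    congr 1
    field_simp
  simp_rw [key]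
  rw [show (0:ℝ) = Real.log (1 + t * 0) / Real.log 2 by simp]
  apply Tendsto.div_const
  apply (Real.continuousAt_log (by norm_num)).tendsto.comp
  apply Tendsto.const_add
  exact (tendsto_one_div_add_atTop_nhds_zero_nat).const_mul t

lemma hasSum_gauss_branch (t : ℝ) (ht0 : 0 ≤ t) :
    HasSum (fun a : ℕ =>
      (Real.log (1 + ((a:ℝ)+1)⁻¹) - Real.log (1 + ((a:ℝ)+1+t)⁻¹)) / Real.log 2)
      (Real.log (1+t) / Real.log 2) := by
  set d : ℕ → ℝ := fun a => (Real.log ((a:ℝ)+1+t) - Real.log ((a:ℝ)+1)) / Real.log 2 with hd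
  have hlog2 : (0:ℝ) < Real.log 2 := Real.log_pos (by norm_num)
  have hg : ∀ a : ℕ, (Real.log (1 + ((a:ℝ)+1)⁻¹) - Real.log (1 + ((a:ℝ)+1+t)⁻¹)) / Real.log 2
      = d a - d (a+1) := by
    intro a
    have h1 : (0:ℝ) < (a:ℝ)+1 := by positivity
    have h2 : (0:ℝ) < (a:ℝ)+1+t := by positivity
    have e1 : 1 + ((a:ℝ)+1)⁻¹ = ((a:ℝ)+2)/((a:ℝ)+1) := by field_simp; ring
    have e2 : 1 + ((a:ℝ)+1+t)⁻¹ = ((a:ℝ)+2+t)/((a:ℝ)+1+t) := by field_simp; ring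
    rw [e1, e2, Real.log_div (by positivity) (ne_of_gt h1),
      Real.log_div (by positivity) (ne_of_gt h2), hd]
    simp only [Nat.cast_add, Nat.cast_one]
    rw [div_sub_div_same]
    congr 1
    try ring
  simp_rw [hg]
  have hnonneg : ∀ a : ℕ, 0 ≤ d a - d (a+1) := by
    intro a
    have h1 : (0:ℝ) < (a:ℝ)+1 := by positivity
    rw [hd]
    simp only [Nat.cast_add, Nat.cast_one]
    rw [div_sub_div_same, le_div_iff₀ hlog2, zero_mul, sub_sub_sub_comm]
    have l1 : Real.log ((a:ℝ)+1+1+t) - Real.log ((a:ℝ)+1+t) ≤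
        Real.log ((a:ℝ)+1+1) - Real.log ((a:ℝ)+1) := by
      rw [← Real.log_div (by positivity) (by positivity),
        ← Real.log_div (by positivity) (by positivity)]
      apply Real.log_le_log (by positivity)
      rw [div_le_div_iff₀ (by positivity) (by positivity)]
      nlinarith
    linarith
  rw [(hasSum_iff_tendsto_nat_of_nonneg hnonneg _)]
  have hps : ∀ n : ℕ, ∑ i ∈ Finset.range n, (d i - d (i+1)) = d 0 - d n :=
    fun n => Finset.sum_range_sub' d n
  simp_rw [hps]
  have hd0 : d 0 = Real.log (1+t) / Real.log 2 := by
    rw [hd]; norm_num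
  rw [← hd0]
  have h2 : Tendsto (fun n : ℕ => d 0 - d n) atTop (nhds (d 0 - 0)) :=
    Tendsto.sub tendsto_const_nhds (tendsto_dt t ht0)
  rwa [sub_zero] at h2

lemma gaussμ_map_gaussMap : gaussμ.map gaussMap = gaussμ := by
  have hfm : IsFiniteMeasure (gaussμ.map gaussMap) :=
    Measure.isFiniteMeasure_map _ _
  apply Measure.ext_of_Iic
  intro t
  rw [Measure.map_apply measurable_gaussMap measurableSet_Iic]
  rcases lt_or_ge t 0 with ht | ht
  · -- t < 0 : both sides zero
    rw [gaussμ_apply (measurable_gaussMap measurableSet_Iic),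
      gaussμ_apply measurableSet_Iic]
    have h1 : gaussMap ⁻¹' Iic t ∩ Ico (0:ℝ) 1 = ∅ := by
      ext x
      simp only [mem_inter_iff, mem_preimage, mem_Iic, mem_empty_iff_false, iff_false, not_and]
      intro hx hx2
      exact absurd ((gaussMap_mem_Ico hx2).1.trans hx) (not_le.mpr ht)
    have h2 : Iic t ∩ Ico (0:ℝ) 1 = ∅ := by
      apply eq_empty_of_forall_notMem
      rintro x ⟨hx1, hx2, _⟩
      exact absurd (hx2.trans hx1) (not_le.mpr ht)
    rw [h1, h2]
  rcases lt_or_ge t 1 with ht1 | ht1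
  · -- main case 0 ≤ t < 1
    set J : ℕ → Set ℝ := fun a => Icc (((a:ℝ)+1+t)⁻¹) (((a:ℝ)+1)⁻¹) with hJ
    have hJsub : ∀ a : ℕ, gaussμ (J a) =
        ENNReal.ofReal ((Real.log (1 + ((a:ℝ)+1)⁻¹) - Real.log (1 + ((a:ℝ)+1+t)⁻¹)) / Real.log 2) := by
      intro a
      have h1 : (0:ℝ) < (a:ℝ)+1 := by positivity
      have h2 : (0:ℝ) < (a:ℝ)+1+t := by positivity
      exact gaussμ_Icc (le_of_lt (inv_pos.mpr h2))
        (by apply inv_anti₀ h1; linarith)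
        (by rw [inv_le_one_iff₀]; right; linarith)
    have hset : gaussMap ⁻¹' Iic t ∩ Ico (0:ℝ) 1
        = ({0} ∪ ⋃ a : ℕ, (J a ∩ Ico (0:ℝ) 1)) ∩ Ico (0:ℝ) 1 := by
      ext x
      simp only [mem_inter_iff, mem_preimage, mem_Iic, mem_union, mem_singleton_iff, mem_iUnion]
      constructor
      · rintro ⟨hgx, hx0, hx1⟩
        refine ⟨?_, hx0, hx1⟩
        rcases eq_or_lt_of_le hx0 with h | h
        · exact Or.inl h.symm
        · right
          have hx1' : (1:ℝ) ≤ 1/x := by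
            rw [le_div_iff₀ h]; linarith
          set b : ℕ := ⌊(1/x : ℝ)⌋₊ with hb
          have hb1 : 1 ≤ b := Nat.le_floor (by exact_mod_cast hx1')
          have hfl : (⌊(1/x : ℝ)⌋ : ℝ) = (b : ℝ) := by
            rw [hb]
            rw [← Int.natCast_floor_eq_floor (by positivity)]
            simp
          have hble : (b:ℝ) ≤ 1/x := Nat.floor_le (by positivity)
          have hxle : 1/x ≤ (b:ℝ) + t := by
            have : gaussMap x = 1/x - (b:ℝ) := by
              rw [gaussMap, if_neg (ne_of_gt h), hfl]
            linarith [hgx, this ▸ hgx]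
          refine ⟨b - 1, ?_, hx0, hx1⟩
          have hbpos : (0:ℝ) < b := by exact_mod_cast hb1
          have e : ((b-1:ℕ):ℝ) + 1 = (b:ℝ) := by
            rw [Nat.cast_sub hb1]; push_cast; ring
          simp only [hJ, mem_Icc, e]
          constructor
          · calc ((b:ℝ)+t)⁻¹ ≤ (1/x)⁻¹ := inv_anti₀ (by positivity) hxle
            _ = x := by rw [one_div, inv_inv]
          · calc x = (1/x)⁻¹ := by rw [one_div, inv_inv]
            _ ≤ ((b:ℝ))⁻¹ := inv_anti₀ hbpos hble
      · rintro ⟨h, hx0, hx1⟩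
        refine ⟨?_, hx0, hx1⟩
        rcases h with rfl | ⟨a, ha, _⟩
        · simp [gaussMap]; linarith
        · have h1 : (0:ℝ) < (a:ℝ)+1 := by positivity
          have h2 : (0:ℝ) < (a:ℝ)+1+t := by positivity
          have hxpos : 0 < x := lt_of_lt_of_le (inv_pos.mpr h2) ha.1
          have hlow : (a:ℝ)+1 ≤ 1/x := by
            rw [le_div_iff₀ hxpos]
            calc ((a:ℝ)+1) * x ≤ ((a:ℝ)+1) * ((a:ℝ)+1)⁻¹ := by
                  apply mul_le_mul_of_nonneg_left ha.2 (le_of_lt h1)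
            _ = 1 := mul_inv_cancel₀ (ne_of_gt h1)
          have hhigh : 1/x ≤ (a:ℝ)+1+t := by
            rw [div_le_iff₀ hxpos]
            calc (1:ℝ) = ((a:ℝ)+1+t) * ((a:ℝ)+1+t)⁻¹ := (mul_inv_cancel₀ (ne_of_gt h2)).symm
            _ ≤ ((a:ℝ)+1+t) * x := mul_le_mul_of_nonneg_left ha.1 (le_of_lt h2)
          have hfl : (⌊(1/x : ℝ)⌋ : ℝ) = (a:ℝ)+1 := by
            have : ⌊(1/x : ℝ)⌋ = (a:ℤ)+1 := by
              apply Int.floor_eq_iff.mpr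
              constructor
              · push_cast; linarith
              · push_cast; linarith
            rw [this]; push_cast; ring
          rw [gaussMap, if_neg (ne_of_gt hxpos), hfl]
          linarith
    have hmeas : MeasurableSet ({0} ∪ ⋃ a : ℕ, (J a ∩ Ico (0:ℝ) 1)) :=
      (measurableSet_singleton 0).union (MeasurableSet.iUnion
        fun a => measurableSet_Icc.inter measurableSet_Ico)
    have hL : gaussμ (gaussMap ⁻¹' Iic t) = gaussμ ({0} ∪ ⋃ a : ℕ, (J a ∩ Ico (0:ℝ) 1)) :=
      gaussμ_congr (measurable_gaussMap measurableSet_Iic) hmeas hset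
    rw [hL]
    have hlog2 : (0:ℝ) < Real.log 2 := Real.log_pos (by norm_num)
    have h0 : gaussμ ({0} : Set ℝ) = 0 := by
      rw [gaussμ_apply (measurableSet_singleton 0)]
      exact setLIntegral_measure_zero _ _
        (measure_mono_null inter_subset_left Real.volume_singleton)
    have hdisj : Pairwise (Function.onFun Disjoint fun a : ℕ => J a ∩ Ico (0:ℝ) 1) := by
      have aux : ∀ a b : ℕ, a < b → Disjoint (J a) (J b) := by
        intro a b hab
        rw [Set.disjoint_left]
        intro x hxa hxb
        simp only [hJ, mem_Icc] at hxa hxb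
        have h2 : (0:ℝ) < (a:ℝ)+1+t := by positivity
        have hcast : (a:ℝ) + 1 ≤ (b:ℝ) := by exact_mod_cast hab
        have : ((b:ℝ)+1)⁻¹ < ((a:ℝ)+1+t)⁻¹ := by
          apply inv_strictAnti₀ h2
          linarith
        linarith [hxa.1, hxb.2]
      intro a b hab
      rcases lt_or_gt_of_ne hab with h | h
      · exact (aux a b h).mono inter_subset_left inter_subset_left
      · exact ((aux b a h).symm).mono inter_subset_left inter_subset_left
    have hsum : gaussμ (⋃ a : ℕ, (J a ∩ Ico (0:ℝ) 1)) = ∑' a : ℕ, gaussμ (J a) := by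
      rw [measure_iUnion hdisj fun a => measurableSet_Icc.inter measurableSet_Ico]
      exact tsum_congr fun a => gaussμ_inter_Ico measurableSet_Icc
    have hU : gaussμ ({0} ∪ ⋃ a : ℕ, (J a ∩ Ico (0:ℝ) 1)) = ∑' a : ℕ, gaussμ (J a) := by
      refine le_antisymm ?_ ?_
      · calc gaussμ ({0} ∪ ⋃ a : ℕ, (J a ∩ Ico (0:ℝ) 1))
            ≤ gaussμ {0} + gaussμ (⋃ a : ℕ, (J a ∩ Ico (0:ℝ) 1)) := measure_union_le _ _
        _ = ∑' a : ℕ, gaussμ (J a) := by rw [h0, zero_add, hsum]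
      · rw [← hsum]; exact measure_mono subset_union_right
    rw [hU]
    have hgnonneg : ∀ a : ℕ,
        0 ≤ (Real.log (1 + ((a:ℝ)+1)⁻¹) - Real.log (1 + ((a:ℝ)+1+t)⁻¹)) / Real.log 2 := by
      intro a
      have h1 : (0:ℝ) < (a:ℝ)+1 := by positivity
      have h2 : (0:ℝ) < (a:ℝ)+1+t := by positivity
      apply div_nonneg _ hlog2.le
      rw [sub_nonneg]
      apply Real.log_le_log (by positivity)
      have : ((a:ℝ)+1+t)⁻¹ ≤ ((a:ℝ)+1)⁻¹ := inv_anti₀ h1 (by linarith)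
      linarith
    have hHS := hasSum_gauss_branch t ht
    calc ∑' a : ℕ, gaussμ (J a)
        = ∑' a : ℕ, ENNReal.ofReal
            ((Real.log (1 + ((a:ℝ)+1)⁻¹) - Real.log (1 + ((a:ℝ)+1+t)⁻¹)) / Real.log 2) :=
          tsum_congr hJsub
      _ = ENNReal.ofReal (Real.log (1+t) / Real.log 2) := by
          rw [← ENNReal.ofReal_tsum_of_nonneg hgnonneg hHS.summable, hHS.tsum_eq]
      _ = gaussμ (Iic t) := by
          have : gaussμ (Iic t) = gaussμ (Icc 0 t) := by
            apply gaussμ_congr measurableSet_Iic measurableSet_Icc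
            ext x
            simp only [mem_inter_iff, mem_Iic, mem_Icc, mem_Ico]
            constructor
            · rintro ⟨hx, hx0, hx1⟩; exact ⟨⟨hx0, hx⟩, hx0, hx1⟩
            · rintro ⟨⟨hx0, hx⟩, _, hx1⟩; exact ⟨hx, hx0, hx1⟩
          rw [this, gaussμ_Icc le_rfl ht (le_of_lt ht1)]
          norm_num
  · -- t ≥ 1 : both sides are the full measure
    apply gaussμ_congr (measurable_gaussMap measurableSet_Iic) measurableSet_Iic
    have e1 : gaussMap ⁻¹' Iic t ∩ Ico (0:ℝ) 1 = Ico (0:ℝ) 1 :=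
      inter_eq_right.mpr fun x hx => (le_of_lt (gaussMap_mem_Ico hx).2).trans ht1
    have e2 : Iic t ∩ Ico (0:ℝ) 1 = Ico (0:ℝ) 1 :=
      inter_eq_right.mpr fun x hx => le_trans (le_of_lt hx.2) ht1
    rw [e1, e2]

lemma gaussμ_map_iterate (j : ℕ) : gaussμ.map (gaussMap^[j]) = gaussμ := by
  induction j with
  | zero => simp [Measure.map_id]
  | succ n ih =>
    rw [Function.iterate_succ', ← Measure.map_map measurable_gaussMap
      (measurable_gaussMap.iterate n), ih, gaussμ_map_gaussMap]

lemma gaussμ_preimage_iterate (j : ℕ) {S : Set ℝ} (hS : MeasurableSet S) :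
    gaussμ (gaussMap^[j] ⁻¹' S) = gaussμ S := by
  rw [← Measure.map_apply (measurable_gaussMap.iterate j) hS, gaussμ_map_iterate]

lemma lipschitz_branch (a : ℕ) (ha : 1 ≤ a) :
    LipschitzOnWith (((a:ℝ≥0))⁻¹ ^ 2) (fun y : ℝ => (y + a)⁻¹) (Ico (0:ℝ) 1) := by
  have haR : (1:ℝ) ≤ (a:ℝ) := by exact_mod_cast ha
  apply LipschitzOnWith.of_dist_le_mul
  intro x hx y hy
  have hx0 : (0:ℝ) < x + a := by linarith [hx.1]
  have hy0 : (0:ℝ) < y + a := by linarith [hy.1]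
  rw [Real.dist_eq, Real.dist_eq]
  have key : (x + a)⁻¹ - (y + a)⁻¹ = (y - x)/((x+a)*(y+a)) := by
    field_simp
    ring
  rw [key, abs_div, abs_of_pos (mul_pos hx0 hy0)]
  have hcoe : ((((a:ℝ≥0))⁻¹ ^ 2 : ℝ≥0) : ℝ) = ((a:ℝ)⁻¹)^2 := by push_cast; ring
  rw [hcoe]
  rw [div_le_iff₀ (mul_pos hx0 hy0)]
  have h1 : |y - x| = |x - y| := abs_sub_comm y x
  have h2 : (a:ℝ)^2 ≤ (x+a)*(y+a) := by nlinarith [hx.1, hy.1]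
  have h3 : (0:ℝ) ≤ |x - y| := abs_nonneg _
  calc |y - x| = |x - y| * 1 := by rw [h1, mul_one]
  _ = (a:ℝ)⁻¹^2 * |x - y| * (a:ℝ)^2 := by
      field_simp
  _ ≤ (a:ℝ)⁻¹^2 * |x - y| * ((x+a)*(y+a)) := by
      apply mul_le_mul_of_nonneg_left h2 (by positivity)

lemma vol_image_branch (a : ℕ) (ha : 1 ≤ a) (S : Set ℝ) :
    volume ((fun y : ℝ => (y + a)⁻¹) '' (S ∩ Ico (0:ℝ) 1)) ≤
      (((a:ℝ≥0))⁻¹ ^ 2 : ℝ≥0) * volume (S ∩ Ico (0:ℝ) 1) := by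
  have hlip : LipschitzOnWith (((a:ℝ≥0))⁻¹ ^ 2) (fun y : ℝ => (y + a)⁻¹) (S ∩ Ico (0:ℝ) 1) :=
    (lipschitz_branch a ha).mono inter_subset_right
  have := hlip.hausdorffMeasure_image_le (d := 1) zero_le_one
  rw [ENNReal.rpow_one, hausdorffMeasure_real] at this
  exact this

lemma cover_branches (N : ℕ) (hN : 1 ≤ N) (V : Set ℝ) :
    Ioc (0:ℝ) ((N:ℝ)⁻¹) ∩ gaussMap ⁻¹' V ⊆
      ⋃ b : ℕ, (fun y : ℝ => (y + ((N+b : ℕ):ℝ))⁻¹) '' (V ∩ Ico (0:ℝ) 1) := by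
  rintro x ⟨⟨hx0, hxN⟩, hxV⟩
  have hNR : (1:ℝ) ≤ (N:ℝ) := by exact_mod_cast hN
  have hNx : (N:ℝ) ≤ 1/x := by
    rw [le_div_iff₀ hx0]
    calc (N:ℝ) * x ≤ (N:ℝ) * (N:ℝ)⁻¹ := by
          apply mul_le_mul_of_nonneg_left hxN (by linarith)
    _ = 1 := mul_inv_cancel₀ (by linarith)
  set c : ℕ := ⌊(1/x : ℝ)⌋₊ with hc
  have hcN : N ≤ c := Nat.le_floor hNx
  have hfl : (⌊(1/x : ℝ)⌋ : ℝ) = (c : ℝ) := by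
    rw [hc, ← Int.natCast_floor_eq_floor (by positivity)]
    simp
  have hgx : gaussMap x = 1/x - (c:ℝ) := by
    rw [gaussMap, if_neg (ne_of_gt hx0), hfl]
  have hy : gaussMap x ∈ Ico (0:ℝ) 1 := by
    rw [gaussMap, if_neg (ne_of_gt hx0)]
    constructor
    · linarith [Int.floor_le (1/x : ℝ)]
    · linarith [Int.lt_floor_add_one (1/x : ℝ)]
  refine mem_iUnion.mpr ⟨c - N, ⟨gaussMap x, ⟨hxV, hy⟩, ?_⟩⟩
  have hcc : ((N + (c - N) : ℕ) : ℝ) = (c : ℝ) := by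
    congr 1
    omega
  rw [hcc, hgx]
  show (1/x - (c:ℝ) + (c:ℝ))⁻¹ = x
  rw [show 1/x - (c:ℝ) + (c:ℝ) = 1/x by ring, one_div, inv_inv]

lemma tsum_sq_le (N : ℕ) (hN : 1 ≤ N) :
    (∑' b : ℕ, (((((N+b : ℕ):ℝ≥0))⁻¹ ^ 2 : ℝ≥0) : ℝ≥0∞)) ≤ ENNReal.ofReal (2 / N) := by
  have hNR : (1:ℝ) ≤ (N:ℝ) := by exact_mod_cast hN
  -- termwise bound by telescoping
  have hterm : ∀ b : ℕ, (((((N+b : ℕ):ℝ≥0))⁻¹ ^ 2 : ℝ≥0) : ℝ≥0∞) ≤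
      ENNReal.ofReal (2 * (((N:ℝ)+b)⁻¹ - ((N:ℝ)+(b+1))⁻¹)) := by
    intro b
    have hc : (1:ℝ) ≤ (N:ℝ)+b := by
      have : (0:ℝ) ≤ (b:ℝ) := Nat.cast_nonneg b
      linarith
    have hc0 : (0:ℝ) < (N:ℝ)+b := by linarith
    have hc1 : (0:ℝ) < (N:ℝ)+b+1 := by linarith
    have hcast : (((((N+b : ℕ):ℝ≥0))⁻¹ ^ 2 : ℝ≥0) : ℝ≥0∞)
        = ENNReal.ofReal ((((N:ℝ)+b))⁻¹ ^ 2) := by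
      rw [← ENNReal.ofReal_coe_nnreal]
      congr 1
      push_cast
      ring
    rw [hcast]
    apply ENNReal.ofReal_le_ofReal
    have he : ((N:ℝ)+b)⁻¹ - ((N:ℝ)+(b+1))⁻¹ = (((N:ℝ)+b) * ((N:ℝ)+b+1))⁻¹ := by
      rw [show (N:ℝ)+((b:ℝ)+1) = (N:ℝ)+b+1 by ring]
      field_simp
      ring
    rw [he, show (((N:ℝ)+b))⁻¹ ^ 2 = (((N:ℝ)+b) * ((N:ℝ)+b))⁻¹ by rw [sq, mul_inv]]
    rw [show (2:ℝ) * ((((N:ℝ)+b) * ((N:ℝ)+b+1))⁻¹) = 2 / (((N:ℝ)+b) * ((N:ℝ)+b+1)) by ring,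
      show ((((N:ℝ)+b) * ((N:ℝ)+b))⁻¹ : ℝ) = 1 / (((N:ℝ)+b) * ((N:ℝ)+b)) by ring,
      div_le_div_iff₀ (by positivity) (by positivity)]
    nlinarith
  calc (∑' b : ℕ, (((((N+b : ℕ):ℝ≥0))⁻¹ ^ 2 : ℝ≥0) : ℝ≥0∞))
      ≤ ∑' b : ℕ, ENNReal.ofReal (2 * (((N:ℝ)+b)⁻¹ - ((N:ℝ)+(b+1))⁻¹)) :=
        ENNReal.tsum_le_tsum hterm
  _ ≤ ENNReal.ofReal (2 / N) := by
      have htel : HasSum (fun b : ℕ => 2 * (((N:ℝ)+b)⁻¹ - ((N:ℝ)+(b+1))⁻¹)) (2 * (N:ℝ)⁻¹) := by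
        apply HasSum.mul_left
        set e : ℕ → ℝ := fun b => ((N:ℝ)+b)⁻¹ with he
        have hcast : ∀ b : ℕ, ((N:ℝ)+((b:ℝ)+1))⁻¹ = e (b+1) := by
          intro b; rw [he]; push_cast; ring_nf
        have hnonneg : ∀ b : ℕ, 0 ≤ e b - e (b+1) := by
          intro b
          apply sub_nonneg.mpr
          apply inv_anti₀ (by positivity)
          push_cast
          linarith
        simp_rw [hcast]
        rw [show (fun b : ℕ => e b - e (b+1)) = fun b : ℕ => e b - e (b+1) from rfl]
        rw [show ((N:ℝ))⁻¹ = e 0 by rw [he]; norm_num]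
        rw [hasSum_iff_tendsto_nat_of_nonneg hnonneg]
        simp_rw [fun n => Finset.sum_range_sub' e n]
        have hlim : Tendsto (fun n : ℕ => e n) atTop (nhds 0) := by
          rw [he]
          apply Tendsto.inv_tendsto_atTop
          apply tendsto_atTop_add_const_left
          exact tendsto_natCast_atTop_atTop
        have := Tendsto.sub (tendsto_const_nhds (x := e 0) (f := atTop)) hlim
        rw [sub_zero] at this
        exact this
      have hnn : ∀ b : ℕ, 0 ≤ 2 * (((N:ℝ)+b)⁻¹ - ((N:ℝ)+(b+1))⁻¹) := by
        intro b
        have : ((N:ℝ)+(b+1))⁻¹ ≤ ((N:ℝ)+b)⁻¹ := by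
          apply inv_anti₀ (by positivity); linarith
        linarith
      rw [← ENNReal.ofReal_tsum_of_nonneg hnn htel.summable, htel.tsum_eq]
      apply ENNReal.ofReal_le_ofReal
      rw [div_eq_mul_inv]

lemma vol_key (N : ℕ) (hN : 1 ≤ N) (V : Set ℝ) :
    volume (Ioc (0:ℝ) ((N:ℝ)⁻¹) ∩ gaussMap ⁻¹' V) ≤
      ENNReal.ofReal (2 / N) * volume (V ∩ Ico (0:ℝ) 1) := by
  calc volume (Ioc (0:ℝ) ((N:ℝ)⁻¹) ∩ gaussMap ⁻¹' V)
      ≤ volume (⋃ b : ℕ, (fun y : ℝ => (y + ((N+b : ℕ):ℝ))⁻¹) '' (V ∩ Ico (0:ℝ) 1)) :=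
        measure_mono (cover_branches N hN V)
  _ ≤ ∑' b : ℕ, volume ((fun y : ℝ => (y + ((N+b : ℕ):ℝ))⁻¹) '' (V ∩ Ico (0:ℝ) 1)) :=
        measure_iUnion_le _
  _ ≤ ∑' b : ℕ, ((((((N+b : ℕ):ℝ≥0))⁻¹ ^ 2 : ℝ≥0) : ℝ≥0∞) * volume (V ∩ Ico (0:ℝ) 1)) := by
        apply ENNReal.tsum_le_tsum
        intro b
        have := vol_image_branch (N+b) (le_trans hN (Nat.le_add_right N b)) V
        convert this using 3 <;> push_cast <;> ring
  _ = (∑' b : ℕ, (((((N+b : ℕ):ℝ≥0))⁻¹ ^ 2 : ℝ≥0) : ℝ≥0∞)) * volume (V ∩ Ico (0:ℝ) 1) :=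
        ENNReal.tsum_mul_right
  _ ≤ ENNReal.ofReal (2 / N) * volume (V ∩ Ico (0:ℝ) 1) :=
        mul_le_mul_left (tsum_sq_le N hN) _

lemma Aset_eq (ψ : ℕ → ℝ) (hψ : ∀ n, 1 ≤ ψ n) (n k : ℕ) (hk : 1 ≤ k) :
    Aset ψ n k = Ico (0:ℝ) 1 ∩ (gaussMap^[k-1]) ⁻¹' (Ioc (0:ℝ) ((⌈ψ n⌉₊ : ℝ)⁻¹)) := by
  set N : ℕ := ⌈ψ n⌉₊ with hNdef
  have hN : 1 ≤ N := by
    rw [hNdef]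
    exact Nat.one_le_ceil_iff.mpr (by linarith [hψ n])
  have hNR : (1:ℝ) ≤ (N:ℝ) := by exact_mod_cast hN
  ext x
  simp only [Aset, mem_setOf_eq, mem_inter_iff, mem_preimage, mem_Ioc]
  constructor
  · rintro ⟨hx, hcfa⟩
    refine ⟨hx, ?_, ?_⟩
    · -- T^[k-1] x > 0
      by_contra h
      push_neg at h
      have hy0 : gaussMap^[k-1] x = 0 :=
        le_antisymm h (gaussMap_iterate_mem_Ico hx (k-1)).1
      rw [cfa, hy0] at hcfa
      norm_num at hcfa
      linarith [hψ n]
    · -- T^[k-1] x ≤ N⁻¹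
      set y := gaussMap^[k-1] x with hy
      have hy0 : 0 < y := by
        by_contra h
        push_neg at h
        have : y = 0 := le_antisymm h (gaussMap_iterate_mem_Ico hx (k-1)).1
        rw [cfa, ← hy, this] at hcfa
        norm_num at hcfa
        linarith [hψ n]
      have hNle : N ≤ ⌊(1/y : ℝ)⌋₊ := by
        apply Nat.ceil_le.mpr
        exact_mod_cast hcfa
      have : (N : ℝ) ≤ 1/y := le_trans (by exact_mod_cast hNle) (Nat.floor_le (by positivity))
      calc y = (1/y)⁻¹ := by rw [one_div, inv_inv]
      _ ≤ ((N:ℝ))⁻¹ := inv_anti₀ (by linarith) this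
  · rintro ⟨hx, hy0, hyN⟩
    refine ⟨hx, ?_⟩
    set y := gaussMap^[k-1] x with hy
    have hNy : (N:ℝ) ≤ 1/y := by
      rw [le_div_iff₀ hy0]
      calc (N:ℝ) * y ≤ (N:ℝ) * (N:ℝ)⁻¹ := mul_le_mul_of_nonneg_left hyN (by linarith)
      _ = 1 := mul_inv_cancel₀ (by linarith)
    have hfloor : N ≤ ⌊(1/y : ℝ)⌋₊ := Nat.le_floor hNy
    calc ψ n ≤ (N : ℝ) := Nat.le_ceil _
    _ ≤ (⌊(1/y : ℝ)⌋₊ : ℝ) := by exact_mod_cast hfloor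
    _ = (cfa k x : ℝ) := by rw [cfa, hy]

theorem stmt_8 :
    ∃ K₂ : ℝ, 0 < K₂ ∧ ∀ (ψ : ℕ → ℝ), (∀ n, 1 ≤ ψ n) → ∀ n k₁ k₂ : ℕ,
      1 ≤ k₁ → k₁ < k₂ →
      gaussμ (Aset ψ n k₁ ∩ Aset ψ n k₂) ≤
        ENNReal.ofReal K₂ * gaussμ (Aset ψ n 1) ^ 2 := by
  refine ⟨64, by norm_num, ?_⟩
  intro ψ hψ n k₁ k₂ hk₁ hk
  set N : ℕ := ⌈ψ n⌉₊ with hNdef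
  have hN : 1 ≤ N := Nat.one_le_ceil_iff.mpr (by linarith [hψ n])
  have hNR : (1:ℝ) ≤ (N:ℝ) := by exact_mod_cast hN
  have hNinv1 : ((N:ℝ))⁻¹ ≤ 1 := inv_le_one_of_one_le₀ hNR
  set I : Set ℝ := Ioc (0:ℝ) ((N:ℝ)⁻¹) with hI
  have hImeas : MeasurableSet I := measurableSet_Ioc
  set c : ℝ≥0∞ := ENNReal.ofReal ((N:ℝ)⁻¹) with hc
  have hvolI : volume I ≤ c := by
    rw [hI, Real.volume_Ioc, hc, sub_zero]
  -- lower bound for A1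
  have hA1' : Aset ψ n 1 = Ico (0:ℝ) 1 ∩ I := by
    rw [Aset_eq ψ hψ n 1 le_rfl]
    simp
    rfl
  have hA1meas : MeasurableSet (Aset ψ n 1) := by
    rw [hA1']; exact measurableSet_Ico.inter hImeas
  have hlow : ENNReal.ofReal (1/2 : ℝ) * c ≤ gaussμ (Aset ψ n 1) := by
    rw [gaussμ_apply hA1meas]
    have hsub : Ioo (0:ℝ) ((N:ℝ)⁻¹) ⊆ Aset ψ n 1 ∩ Ico (0:ℝ) 1 := by
      intro x hx
      have hx1 : x < 1 := lt_of_lt_of_le hx.2 hNinv1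
      refine ⟨?_, hx.1.le, hx1⟩
      rw [hA1']
      exact ⟨⟨hx.1.le, hx1⟩, hx.1, hx.2.le⟩
    calc ENNReal.ofReal (1/2 : ℝ) * c
        = ∫⁻ _ in Ioo (0:ℝ) ((N:ℝ)⁻¹), ENNReal.ofReal (1/2 : ℝ) := by
          rw [setLIntegral_const, Real.volume_Ioo, sub_zero]
    _ ≤ ∫⁻ x in Ioo (0:ℝ) ((N:ℝ)⁻¹), ENNReal.ofReal (1 / ((1 + x) * Real.log 2)) := by
          apply setLIntegral_mono' measurableSet_Ioo
          intro x hx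
          exact gauss_density_ge hx.1.le (le_trans hx.2.le hNinv1)
    _ ≤ ∫⁻ x in Aset ψ n 1 ∩ Ico (0:ℝ) 1, ENNReal.ofReal (1 / ((1 + x) * Real.log 2)) :=
          lintegral_mono_set hsub
  -- upper bound for the intersection
  set m : ℕ := k₂ - k₁ with hmdef
  have hm : 1 ≤ m := by omega
  set V : Set ℝ := Ico (0:ℝ) 1 ∩ (gaussMap^[m-1]) ⁻¹' I with hV
  have hVmeas : MeasurableSet V :=
    measurableSet_Ico.inter ((measurable_gaussMap.iterate (m-1)) hImeas)
  set W : Set ℝ := (Ico (0:ℝ) 1 ∩ I) ∩ (gaussMap^[m]) ⁻¹' I with hW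
  have hWmeas : MeasurableSet W :=
    (measurableSet_Ico.inter hImeas).inter ((measurable_gaussMap.iterate m) hImeas)
  have hAA : Aset ψ n k₁ ∩ Aset ψ n k₂ ⊆ (gaussMap^[k₁-1]) ⁻¹' W := by
    rw [Aset_eq ψ hψ n k₁ hk₁, Aset_eq ψ hψ n k₂ (by omega)]
    rintro x ⟨⟨hx, h1⟩, ⟨-, h2⟩⟩
    refine ⟨⟨gaussMap_iterate_mem_Ico hx _, h1⟩, ?_⟩
    show gaussMap^[m] (gaussMap^[k₁-1] x) ∈ I
    rw [← Function.iterate_add_apply, show m + (k₁ - 1) = k₂ - 1 by omega]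
    exact h2
  have hWV : W ⊆ I ∩ gaussMap ⁻¹' V := by
    rintro x ⟨⟨hx, hxI⟩, hxm⟩
    refine ⟨hxI, gaussMap_mem_Ico hx, ?_⟩
    show gaussMap^[m-1] (gaussMap x) ∈ I
    rw [← Function.iterate_succ_apply]
    rw [show (m-1).succ = m by omega]
    exact hxm
  have hchain : gaussμ (Aset ψ n k₁ ∩ Aset ψ n k₂) ≤ 16 * c^2 := by
    calc gaussμ (Aset ψ n k₁ ∩ Aset ψ n k₂)
        ≤ gaussμ ((gaussMap^[k₁-1]) ⁻¹' W) := measure_mono hAA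
    _ = gaussμ W := gaussμ_preimage_iterate _ hWmeas
    _ ≤ 2 * volume (W ∩ Ico (0:ℝ) 1) := gaussμ_le_two_vol hWmeas
    _ ≤ 2 * volume (I ∩ gaussMap ⁻¹' V) := by
        apply mul_le_mul_right
        exact measure_mono (subset_trans inter_subset_left hWV)
    _ ≤ 2 * (ENNReal.ofReal (2 / N) * volume (V ∩ Ico (0:ℝ) 1)) := by
        apply mul_le_mul_right
        exact vol_key N hN V
    _ ≤ 2 * (ENNReal.ofReal (2 / N) * (2 * gaussμ V)) := by
        apply mul_le_mul_right
        apply mul_le_mul_right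
        exact vol_le_two_gaussμ hVmeas
    _ ≤ 2 * (ENNReal.ofReal (2 / N) * (2 * (2 * c))) := by
        apply mul_le_mul_right
        apply mul_le_mul_right
        apply mul_le_mul_right
        calc gaussμ V ≤ gaussμ ((gaussMap^[m-1]) ⁻¹' I) :=
              measure_mono inter_subset_right
        _ = gaussμ I := gaussμ_preimage_iterate _ hImeas
        _ ≤ 2 * volume (I ∩ Ico (0:ℝ) 1) := gaussμ_le_two_vol hImeas
        _ ≤ 2 * volume I := mul_le_mul_right (measure_mono inter_subset_left) _
        _ ≤ 2 * c := mul_le_mul_right hvolI _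
    _ = 16 * c^2 := by
        rw [show (2:ℝ)/N = 2 * ((N:ℝ))⁻¹ by ring, ENNReal.ofReal_mul (by norm_num)]
        rw [show ENNReal.ofReal (2:ℝ) = 2 by simp [ENNReal.ofReal_ofNat]]
        rw [← hc]
        ring
  calc gaussμ (Aset ψ n k₁ ∩ Aset ψ n k₂) ≤ 16 * c^2 := hchain
  _ = ENNReal.ofReal 64 * (ENNReal.ofReal (1/2 : ℝ) * c)^2 := by
      have h1 : (ENNReal.ofReal (1/2 : ℝ))^2 = ENNReal.ofReal (1/4 : ℝ) := by
        rw [← ENNReal.ofReal_pow (by norm_num)]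
        norm_num
      rw [mul_pow, h1, ← mul_assoc, ← ENNReal.ofReal_mul (by norm_num)]
      rw [show (64:ℝ) * (1/4) = 16 by norm_num]
      rw [show ENNReal.ofReal (16:ℝ) = 16 by simp [ENNReal.ofReal_ofNat]]
  _ ≤ ENNReal.ofReal 64 * gaussμ (Aset ψ n 1)^2 := by
      apply mul_le_mul_right
      exact pow_le_pow_left' hlow 2
end

section
/- Let ψ : ℕ → ℝ⁺ be non-decreasing and suppose liminf_{n→∞} (log ψ(n))/n = ∞ and liminf_{n→∞} (log log ψ(n))/n = log b with 1 < b < ∞. Then for every c with 1 < c < b, the set F(r, ψ) is contained in {x ∈ [0,1) : a_n(x) ≥ e^{cⁿ} for infinitely many n}, and for every d > b, the set {x ∈ [0,1) : a_n(x) ≥ e^{dⁿ} for all sufficiently large n} is contained in F(r, ψ). -/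
open MeasureTheory Filter Set

/-- The set `F(r, ψ)` of points with at least `r` partial quotients `≥ ψ(n)` among the
first `n` terms, for infinitely many `n`. -/
noncomputable def Fset (r : ℕ) (ψ : ℕ → ℝ) : Set ℝ :=
  {x | x ∈ Set.Ico (0 : ℝ) 1 ∧ ∀ N : ℕ, ∃ n ≥ N, ∃ k : Fin r → ℕ,
    StrictMono k ∧ (∀ i, 1 ≤ k i ∧ k i ≤ n) ∧ ∀ i, ψ n ≤ (cfa (k i) x : ℝ)}
theorem stmt_15 (r : ℕ) (hr : 1 ≤ r) (ψ : ℕ → ℝ) (hpos : ∀ n, 0 < ψ n)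
    (hmono : Monotone ψ)
    (hB : Tendsto (fun n : ℕ => Real.log (ψ n) / n) atTop atTop)
    (b : ℝ) (hb1 : 1 < b)
    (hb : Filter.liminf (fun n : ℕ => Real.log (Real.log (ψ n)) / n) atTop = Real.log b) :
    (∀ c : ℝ, 1 < c → c < b →
      Fset r ψ ⊆ {x ∈ Set.Ico (0 : ℝ) 1 |
        ∀ N : ℕ, ∃ n ≥ N, Real.exp (c ^ n) ≤ (cfa n x : ℝ)}) ∧
    (∀ d : ℝ, b < d →
      {x ∈ Set.Ico (0 : ℝ) 1 | ∃ N : ℕ, ∀ n ≥ N, Real.exp (d ^ n) ≤ (cfa n x : ℝ)} ⊆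
        Fset r ψ) := by
  have h1 : ∀ᶠ n : ℕ in atTop, (n : ℝ) ≤ Real.log (ψ n) := by
    filter_upwards [hB.eventually_ge_atTop 1, eventually_ge_atTop 1] with n hn hn1
    have hn0 : (0:ℝ) < n := by exact_mod_cast hn1
    have := (le_div_iff₀ hn0).mp hn
    linarith
  have hlogψ : Tendsto (fun n : ℕ => Real.log (ψ n)) atTop atTop :=
    tendsto_atTop_mono' _ h1 tendsto_natCast_atTop_atTop
  have hψ : Tendsto ψ atTop atTop := by
    have h2 : Tendsto (fun n : ℕ => Real.exp (Real.log (ψ n))) atTop atTop :=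
      Real.tendsto_exp_atTop.comp hlogψ
    exact h2.congr fun n => Real.exp_log (hpos n)
  have hbd : IsBoundedUnder (· ≥ ·) atTop (fun n : ℕ => Real.log (Real.log (ψ n)) / n) := by
    refine isBoundedUnder_of_eventually_ge (a := (0:ℝ)) ?_
    filter_upwards [h1, eventually_ge_atTop 1] with n hn hn1
    have : (1:ℝ) ≤ Real.log (ψ n) := le_trans (by exact_mod_cast hn1) hn
    exact div_nonneg (Real.log_nonneg this) (by positivity)
  constructor
  · intro c hc1 hcb x hx
    obtain ⟨hx01, hF⟩ := hx
    refine ⟨hx01, fun N => ?_⟩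
    have hev : ∀ᶠ n : ℕ in atTop, Real.exp (c ^ n) ≤ ψ n := by
      have hlt : Real.log c <
          liminf (fun n : ℕ => Real.log (Real.log (ψ n)) / n) atTop := by
        rw [hb]; exact Real.log_lt_log (by linarith) hcb
      filter_upwards [eventually_lt_of_lt_liminf hlt hbd, h1, eventually_ge_atTop 1]
        with n hn hn1 hn2
      have hn0 : (0:ℝ) < n := by exact_mod_cast hn2
      have hψn1 : (1:ℝ) ≤ Real.log (ψ n) := le_trans (by exact_mod_cast hn2) hn1
      have h2 : Real.log (c ^ n) < Real.log (Real.log (ψ n)) := by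
        rw [Real.log_pow]
        have := (lt_div_iff₀ hn0).mp hn
        push_cast
        linarith
      have h3 : c ^ n < Real.log (ψ n) := by
        have h4 := Real.exp_lt_exp.mpr h2
        rwa [Real.exp_log (by positivity), Real.exp_log (by linarith)] at h4
      have h5 := Real.exp_lt_exp.mpr h3
      rw [Real.exp_log (hpos n)] at h5
      exact h5.le
    obtain ⟨N1, hN1⟩ := eventually_atTop.mp hev
    set N' := max N N1 with hN'def
    set M : ℕ := Finset.sup (Finset.range N') (fun j => cfa j x) with hM
    obtain ⟨n1, hn1⟩ := eventually_atTop.mp (hψ.eventually_gt_atTop (M : ℝ))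
    obtain ⟨n, hn, k, hkmono, hkb, hka⟩ := hF (max N' n1)
    have hψn : (M : ℝ) < ψ n := hn1 n (le_trans (le_max_right _ _) hn)
    set j := k ⟨0, hr⟩ with hj
    have haj : ψ n ≤ (cfa j x : ℝ) := hka ⟨0, hr⟩
    have hjN' : N' ≤ j := by
      by_contra h
      push_neg at h
      have h6 : cfa j x ≤ M := by
        rw [hM]; exact Finset.le_sup (f := fun j => cfa j x) (Finset.mem_range.mpr h)
      have h7 : (cfa j x : ℝ) ≤ (M : ℝ) := by exact_mod_cast h6
      linarith
    refine ⟨j, le_trans (le_max_left N N1) hjN', ?_⟩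
    have hjn : j ≤ n := (hkb ⟨0, hr⟩).2
    calc Real.exp (c ^ j) ≤ ψ j := hN1 j (le_trans (le_max_right N N1) hjN')
      _ ≤ ψ n := hmono hjn
      _ ≤ (cfa j x : ℝ) := haj
  · intro d hbd' x hx
    obtain ⟨hx01, N, hN⟩ := hx
    have hd1 : 1 < d := lt_trans hb1 hbd'
    set d' : ℝ := (b + d) / 2 with hd'def
    have hd'1 : 1 < d' := by rw [hd'def]; linarith
    have hd'b : b < d' := by rw [hd'def]; linarith
    have hd'd : d' < d := by rw [hd'def]; linarith
    have hfreq : ∃ᶠ n : ℕ in atTop,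
        Real.log (Real.log (ψ n)) / n < Real.log d' := by
      by_contra hcon
      rw [not_frequently] at hcon
      have hev' : ∀ᶠ n : ℕ in atTop,
          Real.log d' ≤ Real.log (Real.log (ψ n)) / n := by
        filter_upwards [hcon] with n h
        exact not_lt.mp h
      have hmem : Real.log d' ∈
          {a : ℝ | ∀ᶠ n : ℕ in atTop, a ≤ Real.log (Real.log (ψ n)) / n} := hev'
      have hliminf := hb
      rw [Filter.liminf_eq] at hliminf
      by_cases hbdd : BddAbove
          {a : ℝ | ∀ᶠ n : ℕ in atTop, a ≤ Real.log (Real.log (ψ n)) / n}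
      · have h8 := le_csSup hbdd hmem
        rw [hliminf] at h8
        have h9 : Real.log b < Real.log d' := Real.log_lt_log (by linarith) hd'b
        linarith
      · rw [Real.sSup_of_not_bddAbove hbdd] at hliminf
        have h9 : 0 < Real.log b := Real.log_pos hb1
        linarith
    have hld : 0 < Real.log d := Real.log_pos hd1
    have hldd' : 0 < Real.log d - Real.log d' :=
      sub_pos.mpr (Real.log_lt_log (by linarith) hd'd)
    refine ⟨hx01, fun N' => ?_⟩
    have hev2 : ∀ᶠ n : ℕ in atTop, N' ≤ n ∧ r ≤ n ∧ N + r ≤ n ∧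
        (n : ℝ) * (Real.log d - Real.log d') ≥ (r : ℝ) * Real.log d ∧
        (n : ℝ) ≤ Real.log (ψ n) ∧ 1 ≤ n := by
      have hc : ∀ᶠ n : ℕ in atTop,
          (r : ℝ) * Real.log d / (Real.log d - Real.log d') ≤ (n : ℝ) :=
        tendsto_natCast_atTop_atTop.eventually_ge_atTop _
      filter_upwards [eventually_ge_atTop N', eventually_ge_atTop r,
        eventually_ge_atTop (N + r), hc, h1, eventually_ge_atTop 1]
        with n a1 a2 a3 a4 a5 a6
      refine ⟨a1, a2, a3, ?_, a5, a6⟩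
      exact (div_le_iff₀ hldd').mp a4
    obtain ⟨n, hnprop, hnlt⟩ := (hev2.and_frequently hfreq).exists
    obtain ⟨hnN', hnr, hnNr, hnlog, hnψ, hn1'⟩ := hnprop
    obtain ⟨m, hm⟩ : ∃ m : ℕ, m = n - r + 1 := ⟨_, rfl⟩
    have hn0 : (0:ℝ) < n := by exact_mod_cast hn1'
    have hψn1 : (1:ℝ) ≤ Real.log (ψ n) := le_trans (by exact_mod_cast hn1') hnψ
    -- ψ n < exp (d' ^ n)
    have hψlt : ψ n < Real.exp (d' ^ n) := by
      have h2 : Real.log (Real.log (ψ n)) < Real.log (d' ^ n) := by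
        rw [Real.log_pow]
        have := (div_lt_iff₀ hn0).mp hnlt
        push_cast
        linarith
      have h3 : Real.log (ψ n) < d' ^ n := by
        have h4 := Real.exp_lt_exp.mpr h2
        rwa [Real.exp_log (by linarith), Real.exp_log (by positivity)] at h4
      have h5 := Real.exp_lt_exp.mpr h3
      rwa [Real.exp_log (hpos n)] at h5
    -- d' ^ n ≤ d ^ m
    have hmd : d' ^ n ≤ d ^ m := by
      have hcast : ((m : ℕ) : ℝ) = (n : ℝ) - r + 1 := by
        rw [hm]; push_cast [Nat.cast_sub hnr]; ring
      have h2 : (n : ℝ) * Real.log d' ≤ (m : ℝ) * Real.log d := by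
        rw [hcast]; nlinarith
      have e1 : d' ^ n = Real.exp ((n : ℝ) * Real.log d') := by
        rw [← Real.log_pow, Real.exp_log (by positivity)]
      have e2 : d ^ m = Real.exp ((m : ℝ) * Real.log d) := by
        rw [← Real.log_pow, Real.exp_log (by positivity)]
      rw [e1, e2]
      exact Real.exp_le_exp.mpr h2
    refine ⟨n, hnN', fun i => m + i, ?_, ?_, ?_⟩
    · intro i j hij
      exact Nat.add_lt_add_left hij m
    · intro i
      have him : (i : ℕ) < r := i.isLt
      show 1 ≤ m + (i : ℕ) ∧ m + (i : ℕ) ≤ n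
      omega
    · intro i
      have him : (i : ℕ) < r := i.isLt
      have hki : N ≤ m + i := by omega
      have h7 := hN (m + i) hki
      have h8 : d ^ m ≤ d ^ (m + (i : ℕ)) := pow_le_pow_right₀ hd1.le (Nat.le_add_right m i)
      calc ψ n ≤ Real.exp (d' ^ n) := hψlt.le
        _ ≤ Real.exp (d ^ m) := Real.exp_le_exp.mpr hmd
        _ ≤ Real.exp (d ^ (m + (i : ℕ))) := Real.exp_le_exp.mpr h8
        _ ≤ (cfa (m + i) x : ℝ) := h7
end

section
/- Let ψ : ℕ → ℝ⁺ be non-decreasing with liminf_{n→∞} (log ψ(n))/n = ∞ and b := exp(liminf_{n→∞} (log log ψ(n))/n) = ∞. Then the Hausdorff dimension of F(r, ψ) equals 0. -/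
open MeasureTheory Filter Set

open scoped ENNReal Topology

namespace Stmt18Aux

set_option linter.unusedSectionVars false
set_option linter.unusedVariables false
set_option linter.unnecessarySimpa false
set_option linter.unnecessarySeqFocus false

def qd (a : ℕ → ℕ) : ℕ → ℕ
  | 0 => 0
  | 1 => 1
  | (k+2) => a k * qd a (k+1) + qd a k

def pd (a : ℕ → ℕ) : ℕ → ℕ
  | 0 => 1
  | 1 => 0
  | (k+2) => a k * pd a (k+1) + pd a k

lemma gauss_step {x : ℝ} (hx : x ∈ Set.Ioo (0:ℝ) 1) (hirr : Irrational x) :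
    gaussMap x ∈ Set.Ioo (0:ℝ) 1 ∧ Irrational (gaussMap x) ∧
      x * ((⌊1/x⌋₊ : ℝ) + gaussMap x) = 1 ∧ 1 ≤ ⌊1/x⌋₊ := by
  have hx0 : x ≠ 0 := ne_of_gt hx.1
  have h1x : 1 < 1/x := one_lt_one_div hx.1 hx.2
  have h1xpos : 0 < 1/x := lt_trans one_pos h1x
  have hinv : Irrational (1/x) := by
    rw [one_div]; exact irrational_inv_iff.mpr hirr
  have hg : gaussMap x = 1/x - ⌊(1/x : ℝ)⌋ := by simp [gaussMap, hx0]
  have hgirr : Irrational (gaussMap x) := by rw [hg]; exact Irrational.sub_intCast hinv _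
  have hfloor : ((⌊1/x⌋₊ : ℝ)) = ((⌊(1/x : ℝ)⌋ : ℝ)) := by
    rw [← Int.natCast_floor_eq_floor h1xpos.le]; norm_num
  have hgmem : gaussMap x ∈ Set.Ioo (0:ℝ) 1 := by
    constructor
    · rcases lt_or_eq_of_le (Int.fract_nonneg (1/x)) with h | h
      · rw [hg]; exact h
      · exfalso
        have : Irrational (Int.fract (1/x)) := by rw [Int.fract]; exact Irrational.sub_intCast hinv _
        rw [← h] at this
        exact this ⟨0, by norm_num⟩
    · rw [hg]; exact Int.fract_lt_one (1/x)
  refine ⟨hgmem, hgirr, ?_, ?_⟩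
  · rw [hg, hfloor]
    field_simp
    ring
  · exact (Nat.one_le_floor_iff _).mpr (le_of_lt h1x)


section
variable {x : ℝ} {a : ℕ → ℕ} {X : ℕ → ℝ}

lemma key (hX0 : X 0 = x) (hrec : ∀ k, X k * ((a k : ℝ) + X (k+1)) = 1) :
    ∀ k, x * (qd a (k+1) + qd a k * X k) = pd a (k+1) + pd a k * X k := by
  intro k
  induction k with
  | zero => simp [qd, pd, hX0]
  | succ k ih =>
      show x * ((qd a (k+2) : ℝ) + qd a (k+1) * X (k+1))
        = (pd a (k+2) : ℝ) + pd a (k+1) * X (k+1)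
      push_cast [qd, pd]
      linear_combination ((a k : ℝ) + X (k+1)) * ih
        - (x * (qd a k : ℝ) - (pd a k : ℝ)) * hrec k

lemma err_rec (hX0 : X 0 = x) (hrec : ∀ k, X k * ((a k : ℝ) + X (k+1)) = 1) (k : ℕ) :
    x * qd a (k+1) - pd a (k+1) = -(X k) * (x * qd a k - pd a k) := by
  linear_combination key hX0 hrec k

lemma det (a : ℕ → ℕ) : ∀ k, (pd a k : ℤ) * qd a (k+1) - pd a (k+1) * qd a k = (-1)^k := by
  intro k
  induction k with
  | zero => simp [qd, pd]
  | succ k ih =>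
      show (pd a (k+1) : ℤ) * qd a (k+2) - (pd a (k+2) : ℤ) * qd a (k+1) = _
      push_cast [qd, pd]
      linear_combination (-1 : ℤ) * ih

lemma err_abs (hX0 : X 0 = x) (hrec : ∀ k, X k * ((a k : ℝ) + X (k+1)) = 1)
    (hXm : ∀ k, X k ∈ Set.Ioo (0:ℝ) 1) (k : ℕ) :
    |x * qd a k - pd a k| * (X k * qd a k + qd a (k+1)) = 1 := by
  have heq : -(x * qd a k - pd a k) * (X k * qd a k + qd a (k+1))
      = ((pd a k : ℝ) * qd a (k+1) - pd a (k+1) * qd a k) := by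
    linear_combination (-(qd a k : ℝ)) * err_rec hX0 hrec k
  have hdet : ((pd a k : ℝ) * qd a (k+1) - pd a (k+1) * qd a k) = (-1 : ℝ)^k := by
    exact_mod_cast congrArg (fun z : ℤ => (z : ℝ)) (det a k)
  have hS : 0 ≤ X k * qd a k + qd a (k+1) := by
    have := (hXm k).1
    positivity
  calc |x * qd a k - pd a k| * (X k * qd a k + qd a (k+1))
      = |(-(x * qd a k - pd a k)) * (X k * qd a k + qd a (k+1))| := by
        rw [abs_mul, abs_neg, abs_of_nonneg hS]
    _ = |(-1 : ℝ)^k| := by rw [heq, hdet]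
    _ = 1 := by simp [abs_pow]


lemma qd_one_le (ha : ∀ k, 1 ≤ a k) : ∀ k, 1 ≤ qd a (k+1) := by
  intro k
  induction k with
  | zero => simp [qd]
  | succ k ih =>
      show 1 ≤ a k * qd a (k+1) + qd a k
      calc 1 ≤ 1 * qd a (k+1) + 0 := by simpa using ih
      _ ≤ a k * qd a (k+1) + qd a k := by
        gcongr
        · exact ha k
        · exact Nat.zero_le _
  
lemma qd_mono (ha : ∀ k, 1 ≤ a k) (k : ℕ) : qd a k ≤ qd a (k+1) := by
  match k with
  | 0 => simp [qd]
  | (k+1) =>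
      show qd a (k+1) ≤ a k * qd a (k+1) + qd a k
      calc qd a (k+1) = 1 * qd a (k+1) + 0 := by ring
      _ ≤ a k * qd a (k+1) + qd a k := by
        gcongr
        · exact ha k
        · exact Nat.zero_le _

lemma qd_ge (ha : ∀ k, 1 ≤ a k) : ∀ k, k + 1 ≤ qd a (k+2) := by
  intro k
  induction k with
  | zero => simpa [qd] using ha 0
  | succ k ih =>
      show k + 2 ≤ a (k+1) * qd a (k+2) + qd a (k+1)
      have h1 : 1 ≤ qd a (k+1) := qd_one_le ha k
      have h2 : qd a (k+2) ≤ a (k+1) * qd a (k+2) := Nat.le_mul_of_pos_left _ (ha (k+1))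
      omega

lemma growth (ha : ∀ k, 1 ≤ a k) (m K : ℕ) (hsmall : ∀ k, K ≤ k → a k < qd a (k+1) ^ m) :
    ∀ j, qd a (K+j+1) ≤ (qd a (K+1) + 2) ^ ((m+2) ^ j) := by
  set C := qd a (K+1) + 2 with hC
  have hC2 : 2 ≤ C := by omega
  intro j
  induction j with
  | zero =>
      have : (m+2)^0 = 1 := pow_zero _
      simp only [Nat.add_zero, this, pow_one]
      omega
  | succ j ih =>
      have hQ1 : 1 ≤ qd a (K+j+1) := qd_one_le ha _
      have step : qd a (K+j+2) ≤ 2 * qd a (K+j+1) ^ (m+1) := by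
        have h1 : a (K+j) < qd a (K+j+1) ^ m := hsmall _ (by omega)
        have h2 : qd a (K+j) ≤ qd a (K+j+1) := qd_mono ha _
        have h3 : qd a (K+j+1) ≤ qd a (K+j+1) ^ (m+1) :=
          Nat.le_self_pow (by omega) _
        have h4 : a (K+j) * qd a (K+j+1) ≤ qd a (K+j+1) ^ m * qd a (K+j+1) := by
          exact Nat.mul_le_mul_right _ (by omega)
        have h5 : qd a (K+j+1) ^ m * qd a (K+j+1) = qd a (K+j+1) ^ (m+1) := by
          rw [pow_succ]
        show a (K+j) * qd a (K+j+1) + qd a (K+j) ≤ 2 * qd a (K+j+1) ^ (m+1)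
        omega
      have hCpow : 1 ≤ C ^ ((m+2) ^ j) := Nat.one_le_pow _ _ (by omega)
      calc qd a (K+j+2) ≤ 2 * qd a (K+j+1) ^ (m+1) := step
        _ ≤ C ^ ((m+2)^j) * (C ^ ((m+2)^j)) ^ (m+1) := by
            have he1 : 1 ≤ (m+2)^j := Nat.one_le_pow _ _ (by omega)
            have h2C : 2 ≤ C ^ ((m+2)^j) := le_trans hC2 (Nat.le_self_pow (by omega) _)
            exact Nat.mul_le_mul h2C (Nat.pow_le_pow_left ih _)
        _ = C ^ ((m+2)^j + (m+2)^j * (m+1)) := by rw [← pow_mul, ← pow_add]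
        _ ≤ C ^ ((m+2)^(j+1)) := by
            apply Nat.pow_le_pow_right (by omega)
            have : (m+2)^(j+1) = (m+2)^j * (m+1) + (m+2)^j := by ring
            omega

lemma digit_bound (ha : ∀ k, 1 ≤ a k) (m K : ℕ)
    (hsmall : ∀ k, K ≤ k → a k < qd a (k+1) ^ m) :
    ∀ k, K ≤ k → a k < (qd a (K+1) + 2) ^ ((m+2) ^ (k+1)) := by
  intro k hk
  obtain ⟨j, rfl⟩ : ∃ j, k = K + j := ⟨k - K, by omega⟩
  set C := qd a (K+1) + 2 with hC
  have hC2 : 2 ≤ C := by omega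
  calc a (K+j) < qd a (K+j+1) ^ m := hsmall _ (by omega)
    _ ≤ (C ^ ((m+2)^j)) ^ m := by
        gcongr
        · exact growth ha m K hsmall j
    _ = C ^ ((m+2)^j * m) := by rw [← pow_mul]
    _ ≤ C ^ ((m+2)^(K+j+1)) := by
        apply Nat.pow_le_pow_right (by omega)
        calc (m+2)^j * m ≤ (m+2)^(K+j) * (m+2) :=
          Nat.mul_le_mul (Nat.pow_le_pow_right (by omega) (by omega)) (by omega)
        _ = (m+2)^(K+j+1) := by rw [← pow_succ]


variable (hX0 : X 0 = x) (hrec : ∀ k, X k * ((a k : ℝ) + X (k+1)) = 1)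
  (hXm : ∀ k, X k ∈ Set.Ioo (0:ℝ) 1) (ha : ∀ k, 1 ≤ a k)

include hX0 hrec hXm ha

lemma err_qd_le (k : ℕ) : |x * qd a k - pd a k| * qd a (k+1) ≤ 1 := by
  have h := err_abs hX0 hrec hXm k
  have h1 : (0:ℝ) ≤ X k * qd a k := by
    have := (hXm k).1.le
    positivity
  nlinarith [abs_nonneg (x * qd a k - pd a k)]

lemma err_le_one (k : ℕ) : |x * qd a k - pd a k| ≤ 1 := by
  have h := err_qd_le hX0 hrec hXm ha k
  have h1 : (1:ℝ) ≤ qd a (k+1) := by exact_mod_cast qd_one_le ha k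
  nlinarith [abs_nonneg (x * qd a k - pd a k)]

lemma approx_ineq (k : ℕ) :
    |x * qd a (k+1) - pd a (k+1)| * ((a k : ℝ) * qd a (k+1)) ≤ 1 := by
  have h1 : |x * qd a (k+1) - pd a (k+1)| = X k * |x * qd a k - pd a k| := by
    rw [err_rec hX0 hrec k, abs_mul, abs_neg, abs_of_pos (hXm k).1]
  have h2 : (a k : ℝ) * X k ≤ 1 := by
    nlinarith [(hXm (k+1)).1, (hXm k).1, hrec k]
  have h3 := err_qd_le hX0 hrec hXm ha k
  have h4 : (0:ℝ) ≤ (a k : ℝ) * X k := by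
    have := (hXm k).1.le
    positivity
  calc |x * qd a (k+1) - pd a (k+1)| * ((a k : ℝ) * qd a (k+1))
      = ((a k : ℝ) * X k) * (|x * qd a k - pd a k| * qd a (k+1)) := by rw [h1]; ring
    _ ≤ 1 * 1 := by
        apply mul_le_mul h2 h3 (by positivity) (by linarith)
    _ = 1 := by ring

lemma pd_le_two_qd (hx0 : 0 ≤ x) (hx1 : x < 1) (k : ℕ) :
    (pd a (k+1) : ℝ) ≤ 2 * qd a (k+1) := by
  have h := abs_le.mp (err_le_one hX0 hrec hXm ha (k+1))
  have h1 : (1:ℝ) ≤ qd a (k+1) := by exact_mod_cast qd_one_le ha k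
  nlinarith [h.1, h.2]


end

lemma exists_good_rational {x : ℝ} (hx : x ∈ Set.Ico (0:ℝ) 1) (hirr : Irrational x)
    {ψ : ℕ → ℝ} (hψexp : ∀ c : ℝ, 1 ≤ c → ∀ᶠ n in atTop, Real.exp (c ^ n) ≤ ψ n)
    (hfreq : ∃ᶠ k in atTop, ψ (k+1) ≤ (cfa (k+1) x : ℝ)) (m N : ℕ) :
    ∃ b : ℕ, N ≤ b ∧ 2 ≤ b ∧ ∃ p : ℤ, 0 ≤ p ∧ p ≤ 2*b ∧ |x - p/b| < 1/(b:ℝ)^m := by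
  -- set up the Gauss map orbit
  have hxne : x ≠ 0 := by
    intro h
    exact Rat.not_irrational 0 (by simpa [h] using hirr)
  have hx1 : x ∈ Set.Ioo (0:ℝ) 1 := ⟨lt_of_le_of_ne hx.1 (Ne.symm hxne), hx.2⟩
  set X : ℕ → ℝ := fun k => gaussMap^[k] x with hX
  set a : ℕ → ℕ := fun k => ⌊1 / X k⌋₊ with hadef
  have hXm : ∀ k, X k ∈ Set.Ioo (0:ℝ) 1 ∧ Irrational (X k) := by
    intro k
    induction k with
    | zero => exact ⟨hx1, hirr⟩
    | succ k ih =>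
        have hstep := gauss_step ih.1 ih.2
        have : X (k+1) = gaussMap (X k) := by
          simp [hX, Function.iterate_succ_apply']
        rw [this]
        exact ⟨hstep.1, hstep.2.1⟩
  have hX0 : X 0 = x := by simp [hX]
  have hrec : ∀ k, X k * ((a k : ℝ) + X (k+1)) = 1 := by
    intro k
    have hstep := gauss_step (hXm k).1 (hXm k).2
    have h1 : X (k+1) = gaussMap (X k) := by simp [hX, Function.iterate_succ_apply']
    rw [h1]
    exact hstep.2.2.1
  have ha : ∀ k, 1 ≤ a k := fun k => (gauss_step (hXm k).1 (hXm k).2).2.2.2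
  have hcfa : ∀ k, cfa (k+1) x = a k := fun k => rfl
  have hXm' : ∀ k, X k ∈ Set.Ioo (0:ℝ) 1 := fun k => (hXm k).1
  -- find a good index k
  set K := N + 2 with hK
  have hexists : ∃ k, K ≤ k ∧ qd a (k+1) ^ m ≤ a k := by
    by_contra hcon
    push_neg at hcon
    have hsmall : ∀ k, K ≤ k → a k < qd a (k+1) ^ m := fun k hk => hcon k hk
    set C := qd a (K+1) + 2 with hC
    have hC2 : 2 ≤ C := by omega
    set c : ℝ := ((m:ℝ) + 2) * (Real.log C + 1) with hc
    have hlogC : 0 ≤ Real.log C := Real.log_nonneg (by exact_mod_cast (by omega : 1 ≤ C))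
    have hev : ∀ᶠ k in atTop, Real.exp (c ^ (k+1)) ≤ ψ (k+1) := by
      obtain ⟨n₀, hn₀⟩ := eventually_atTop.mp (hψexp c (by nlinarith))
      exact eventually_atTop.mpr ⟨n₀, fun k hk => hn₀ (k+1) (by omega)⟩
    have hev2 : ∀ᶠ k in atTop, K ≤ k := eventually_ge_atTop K
    obtain ⟨k, hψk, hexpk, hKk⟩ := (hfreq.and_eventually (hev.and hev2)).exists
    rw [hcfa k] at hψk
    have hak : Real.exp (c ^ (k+1)) ≤ (a k : ℝ) := le_trans hexpk hψk
    have hbound := digit_bound ha m K hsmall k hKk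
    have hakpos : (0:ℝ) < a k := by exact_mod_cast ha k
    have h1 : c ^ (k+1) ≤ Real.log (a k) := by
      calc c ^ (k+1) = Real.log (Real.exp (c ^ (k+1))) := (Real.log_exp _).symm
        _ ≤ Real.log (a k) := Real.log_le_log (Real.exp_pos _) hak
    have h2 : Real.log (a k) < ((m+2) ^ (k+1) : ℕ) * Real.log C := by
      have hlt : (a k : ℝ) < ((C : ℝ)) ^ ((m+2) ^ (k+1) : ℕ) := by
        exact_mod_cast hbound
      calc Real.log (a k) < Real.log ((C:ℝ) ^ ((m+2) ^ (k+1) : ℕ)) :=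
            Real.log_lt_log hakpos hlt
        _ = ((m+2) ^ (k+1) : ℕ) * Real.log C := by rw [Real.log_pow]
    have h3 : (((m+2) ^ (k+1) : ℕ) : ℝ) = ((m:ℝ) + 2) ^ (k+1) := by push_cast; ring
    rw [h3] at h2
    have h4 : ((m:ℝ) + 2) ^ (k+1) * (Real.log C + 1) ≤ c ^ (k+1) := by
      rw [hc, mul_pow]
      have hle : Real.log C + 1 ≤ (Real.log C + 1) ^ (k+1) :=
        le_self_pow₀ (by linarith) (by omega)
      exact mul_le_mul_of_nonneg_left hle (by positivity)
    have h5 : (0:ℝ) < ((m:ℝ) + 2) ^ (k+1) := by positivity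
    nlinarith
  obtain ⟨k, hKk, hak⟩ := hexists
  refine ⟨qd a (k+1), ?_, ?_, pd a (k+1), by positivity, ?_, ?_⟩
  · -- N ≤ b
    obtain ⟨j, rfl⟩ : ∃ j, k = j + 1 := ⟨k - 1, by omega⟩
    have h2 : j + 1 ≤ qd a (j + 1 + 1) := qd_ge ha j
    omega
  · obtain ⟨j, rfl⟩ : ∃ j, k = j + 1 := ⟨k - 1, by omega⟩
    have h2 : j + 1 ≤ qd a (j + 1 + 1) := qd_ge ha j
    omega
  · -- p ≤ 2b
    have := pd_le_two_qd hX0 hrec hXm' ha hx.1 hx.2 k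
    exact_mod_cast this
  · -- the approximation
    have hQ1 : 1 ≤ qd a (k+1) := qd_one_le ha k
    have hQ2 : (2:ℝ) ≤ qd a (k+1) := by
      have hn : 2 ≤ qd a (k+1) := by
        obtain ⟨j, rfl⟩ : ∃ j, k = j + 1 := ⟨k - 1, by omega⟩
        have h2 : j + 1 ≤ qd a (j + 1 + 1) := qd_ge ha j
        omega
      exact_mod_cast hn
    set b : ℝ := (qd a (k+1) : ℝ) with hb
    have hbpos : (0:ℝ) < b := by linarith
    have key2 : |x * b - pd a (k+1)| * (b ^ m * b) ≤ 1 := by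
      have hcast : (b:ℝ) ^ m ≤ (a k : ℝ) := by
        rw [hb]
        exact_mod_cast hak
      calc |x * b - pd a (k+1)| * (b ^ m * b)
          ≤ |x * b - pd a (k+1)| * ((a k : ℝ) * b) := by
            gcongr
        _ ≤ 1 := approx_ineq hX0 hrec hXm' ha k
    have heq : x - (pd a (k+1) : ℤ) / b = (x * b - pd a (k+1)) / b := by
      push_cast
      field_simp
    rw [heq, abs_div, abs_of_pos hbpos, div_lt_div_iff₀ hbpos (by positivity : (0:ℝ) < b ^ m)]
    push_cast
    nlinarith [abs_nonneg (x * b - (pd a (k+1) : ℝ)), pow_pos hbpos m,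
      (one_le_pow₀ (by linarith : (1:ℝ) ≤ b) : (1:ℝ) ≤ b ^ m)]


noncomputable def Lset (m : ℕ) : Set ℝ :=
  {x | ∃ᶠ b : ℕ in atTop, ∃ p : ℤ, 0 ≤ p ∧ p ≤ 2*b ∧ |x - p/b| < 1/(b:ℝ)^m}

lemma ball_diam_le (c rad : ℝ) :
    EMetric.diam (Metric.ball c rad) ≤ ENNReal.ofReal (2 * rad) := by
  rw [← Metric.emetric_ball]
  refine le_trans EMetric.diam_ball ?_
  rw [ENNReal.ofReal_mul (by norm_num : (0:ℝ) ≤ 2)]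
  gcongr
  norm_num

lemma hausdorff_Lset_zero {d : ℝ} (hd : 0 < d) (m : ℕ) (hm : 2 < (m:ℝ) * d) :
    μH[d] (Lset m) = 0 := by
  have hm1 : 1 ≤ m := by
    by_contra h
    push_neg at h
    interval_cases m <;> simp_all <;> linarith
  set g : ℕ → ℝ≥0∞ := fun b =>
    (2*b+1) * ENNReal.ofReal ((2 / (b:ℝ)^m) ^ d) with hg
  -- summability of g
  have hsum : ∑' b, g b ≠ ∞ := by
    have hofReal : ∀ b : ℕ, g b = ENNReal.ofReal ((2*(b:ℝ)+1) * (2 / (b:ℝ)^m) ^ d) := by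
      intro b
      have hcoe : (2 * (b:ℝ≥0∞) + 1) = ENNReal.ofReal (2*(b:ℝ)+1) := by
        rw [show (2*(b:ℝ)+1) = ((2*b+1 : ℕ) : ℝ) by push_cast; ring, ENNReal.ofReal_natCast]
        push_cast
        ring
      rw [hg]
      dsimp only
      rw [hcoe, ← ENNReal.ofReal_mul (by positivity)]
    have hnonneg : ∀ b : ℕ, 0 ≤ (2*(b:ℝ)+1) * (2 / (b:ℝ)^m) ^ d := by
      intro b; positivity
    have hsummable : Summable (fun b : ℕ => (2*(b:ℝ)+1) * (2 / (b:ℝ)^m) ^ d) := by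
      have hp : (1 : ℝ) - (m:ℝ)*d < -1 := by linarith
      have hbase : Summable (fun b : ℕ => 3 * (2:ℝ)^d * (b:ℝ) ^ ((1:ℝ) - (m:ℝ)*d)) :=
        (Real.summable_nat_rpow.mpr hp).mul_left _
      refine Summable.of_nonneg_of_le hnonneg (fun b => ?_) hbase
      rcases Nat.eq_zero_or_pos b with rfl | hb
      · have h0 : ((0:ℕ):ℝ) = 0 := by norm_num
        rw [h0]
        rw [zero_pow (by omega : m ≠ 0), div_zero, Real.zero_rpow hd.ne', mul_zero,
          Real.zero_rpow (by linarith : (1:ℝ) - (m:ℝ)*d ≠ 0), mul_zero]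
      · have hbpos : (0:ℝ) < b := by exact_mod_cast hb
        have hb1 : (1:ℝ) ≤ b := by exact_mod_cast hb
        have e1 : (2 / (b:ℝ)^m) ^ d = 2^d / ((b:ℝ)^m)^d :=
          Real.div_rpow (by norm_num) (by positivity) d
        have e2 : ((b:ℝ)^m)^d = (b:ℝ) ^ ((m:ℝ)*d) := by
          rw [← Real.rpow_natCast (b:ℝ) m, ← Real.rpow_mul hbpos.le]
        have e3 : (b:ℝ) ^ ((1:ℝ) - (m:ℝ)*d) = (b:ℝ) / (b:ℝ) ^ ((m:ℝ)*d) := by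
          rw [Real.rpow_sub hbpos, Real.rpow_one]
        rw [e1, e2, e3]
        rw [div_eq_mul_inv, div_eq_mul_inv]
        have hinv : (0:ℝ) ≤ ((b:ℝ) ^ ((m:ℝ)*d))⁻¹ := by positivity
        have h2d : (0:ℝ) < 2^d := Real.rpow_pos_of_pos (by norm_num) d
        calc (2*(b:ℝ)+1) * (2^d * ((b:ℝ) ^ ((m:ℝ)*d))⁻¹)
            ≤ (3*(b:ℝ)) * (2^d * ((b:ℝ) ^ ((m:ℝ)*d))⁻¹) := by
              apply mul_le_mul_of_nonneg_right (by linarith) (by positivity)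
          _ = 3 * 2^d * ((b:ℝ) * ((b:ℝ) ^ ((m:ℝ)*d))⁻¹) := by ring
    rw [funext hofReal, ← ENNReal.ofReal_tsum_of_nonneg hnonneg hsummable]
    exact ENNReal.ofReal_ne_top
  -- the covering estimate
  have hcov : μH[d] (Lset m) ≤ liminf (fun N : ℕ => ∑' j : ℕ, g (N + j)) atTop := by
    have hmne : m ≠ 0 := by omega
    set t : ∀ _N : ℕ, (Σ j : ℕ, Fin (2*(_N+j)+1)) → Set ℝ := fun N i =>
      Metric.ball ((i.2 : ℕ) / ((N + i.1 : ℕ) : ℝ)) (1 / ((N + i.1 : ℕ) : ℝ)^m) with htdef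
    have hdiam : ∀ N (i : Σ j : ℕ, Fin (2*(N+j)+1)),
        EMetric.diam (t N i) ≤ ENNReal.ofReal (2 / ((N + i.1 : ℕ) : ℝ)^m) := by
      intro N i
      refine le_trans (ball_diam_le _ _) ?_
      apply ENNReal.ofReal_le_ofReal
      rw [mul_one_div]
    have hr0 : Tendsto (fun N : ℕ => ENNReal.ofReal (2 / (N:ℝ)^m)) atTop (𝓝 0) := by
      have h1 : Tendsto (fun N : ℕ => (N:ℝ)^m) atTop atTop :=
        (tendsto_pow_atTop hmne).comp tendsto_natCast_atTop_atTop
      have h2 : Tendsto (fun N : ℕ => 2 / (N:ℝ)^m) atTop (𝓝 0) :=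
        Tendsto.div_atTop tendsto_const_nhds h1
      have := ENNReal.tendsto_ofReal h2
      rwa [ENNReal.ofReal_zero] at this
    refine le_trans (MeasureTheory.Measure.hausdorffMeasure_le_liminf_tsum (l := atTop) d (Lset m)
      (fun N : ℕ => ENNReal.ofReal (2 / (N:ℝ)^m)) hr0 t ?_ ?_) ?_
    · -- diameters small
      filter_upwards [eventually_ge_atTop 1] with N hN i
      refine le_trans (hdiam N i) (ENNReal.ofReal_le_ofReal ?_)
      have hN0 : (0:ℝ) < N := by exact_mod_cast hN
      have hle : ((N:ℝ)) ≤ ((N + i.1 : ℕ):ℝ) := by exact_mod_cast Nat.le_add_right N i.1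
      have hpow : ((N:ℝ))^m ≤ (((N + i.1 : ℕ)):ℝ)^m := pow_le_pow_left₀ hN0.le hle m
      exact div_le_div_of_nonneg_left (by norm_num) (pow_pos hN0 m) hpow
    · -- covering
      filter_upwards with N x hx
      simp only [Lset, mem_setOf_eq] at hx
      rw [frequently_atTop] at hx
      obtain ⟨b, hbN, p, hp0, hp2, hplt⟩ := hx N
      have hb1 : 1 ≤ b := by
        by_contra hb
        push_neg at hb
        interval_cases b
        simp only [Nat.cast_zero, zero_pow hmne, div_zero] at hplt
        exact (abs_nonneg _).not_gt (by simpa using hplt)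
      refine mem_iUnion.mpr ⟨⟨b - N, ⟨p.toNat, ?_⟩⟩, ?_⟩
      · have : (p.toNat : ℤ) ≤ 2*b := le_trans (by omega) hp2
        omega
      · have hbj : N + (b - N) = b := by omega
        simp only [htdef, hbj, Metric.mem_ball, Real.dist_eq]
        have hptoNat : ((p.toNat : ℕ) : ℝ) = (p : ℝ) := by
          exact_mod_cast Int.toNat_of_nonneg hp0
        rw [hptoNat]
        exact hplt
    · -- compare sums
      apply liminf_le_liminf
      case hu => isBoundedDefault
      case hv => isBoundedDefault
      filter_upwards with N
      rw [ENNReal.tsum_sigma']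
      apply ENNReal.tsum_le_tsum
      intro j
      have hterm : ∀ i : Fin (2*(N+j)+1),
          EMetric.diam (t N ⟨j, i⟩) ^ d ≤ ENNReal.ofReal ((2 / ((N + j : ℕ) : ℝ)^m) ^ d) := by
        intro i
        rw [← ENNReal.ofReal_rpow_of_nonneg (by positivity) hd.le]
        exact ENNReal.rpow_le_rpow (hdiam N ⟨j, i⟩) hd.le
      calc ∑' i : Fin (2*(N+j)+1), EMetric.diam (t N ⟨j, i⟩) ^ d
          ≤ ∑' _i : Fin (2*(N+j)+1), ENNReal.ofReal ((2 / ((N + j : ℕ) : ℝ)^m) ^ d) :=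
            ENNReal.tsum_le_tsum hterm
        _ = ((2*(N+j)+1 : ℕ) : ℝ≥0∞) * ENNReal.ofReal ((2 / ((N + j : ℕ) : ℝ)^m) ^ d) := by
            rw [tsum_fintype]
            simp [Finset.sum_const, nsmul_eq_mul]
        _ = g (N + j) := by
            rw [hg]
            push_cast
            ring
  have htail : Tendsto (fun N : ℕ => ∑' j, g (j + N)) atTop (𝓝 0) :=
    ENNReal.tendsto_sum_nat_add g hsum
  have heqfun : (fun N : ℕ => ∑' j : ℕ, g (N + j)) = (fun N : ℕ => ∑' j : ℕ, g (j + N)) := by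
    funext N
    exact tsum_congr fun j => by rw [Nat.add_comm]
  refine le_antisymm ?_ zero_le
  rw [heqfun] at hcov
  exact hcov.trans_eq htail.liminf_eq


section
variable {ψ : ℕ → ℝ}

lemma psi_exp (hpos : ∀ n, 0 < ψ n)
    (hB : Tendsto (fun n : ℕ => Real.log (ψ n) / n) atTop atTop)
    (hb : Tendsto (fun n : ℕ => Real.log (Real.log (ψ n)) / n) atTop atTop)
    (c : ℝ) (hc : 1 ≤ c) : ∀ᶠ n in atTop, Real.exp (c ^ n) ≤ ψ n := by
  filter_upwards [hB.eventually_ge_atTop 1, hb.eventually_ge_atTop (Real.log c),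
    eventually_ge_atTop 1] with n h1 h2 hn
  have hn1 : (1:ℝ) ≤ n := by exact_mod_cast hn
  have hnpos : (0:ℝ) < n := by linarith
  have hlog : (n:ℝ) ≤ Real.log (ψ n) := by
    have := (le_div_iff₀ hnpos).mp h1
    linarith
  have hlogpos : 0 < Real.log (ψ n) := by linarith
  have hloglog : (n:ℝ) * Real.log c ≤ Real.log (Real.log (ψ n)) := by
    have := (le_div_iff₀ hnpos).mp h2
    linarith
  have hcpos : (0:ℝ) < c := by linarith
  have h3 : c ^ n ≤ Real.log (ψ n) := by
    calc c ^ n = Real.exp (Real.log (c ^ n)) := (Real.exp_log (by positivity)).symm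
      _ = Real.exp ((n:ℝ) * Real.log c) := by rw [Real.log_pow]
      _ ≤ Real.exp (Real.log (Real.log (ψ n))) := Real.exp_le_exp.mpr hloglog
      _ = Real.log (ψ n) := Real.exp_log hlogpos
  calc Real.exp (c ^ n) ≤ Real.exp (Real.log (ψ n)) := Real.exp_le_exp.mpr h3
    _ = ψ n := Real.exp_log (hpos n)

lemma psi_tend (hpos : ∀ n, 0 < ψ n)
    (hB : Tendsto (fun n : ℕ => Real.log (ψ n) / n) atTop atTop)
    (B : ℝ) : ∀ᶠ n in atTop, B < ψ n := by
  filter_upwards [hB.eventually_ge_atTop (max B 0 + 1), eventually_ge_atTop 1] with n h1 hn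
  have hn1 : (1:ℝ) ≤ n := by exact_mod_cast hn
  have hnpos : (0:ℝ) < n := by linarith
  have hlog : (max B 0 + 1) * n ≤ Real.log (ψ n) := (le_div_iff₀ hnpos).mp h1
  have h2 : max B 0 + 1 ≤ Real.log (ψ n) := by nlinarith [le_max_right B 0]
  have h3 := Real.add_one_le_exp (Real.log (ψ n))
  rw [Real.exp_log (hpos n)] at h3
  have := le_max_left B 0
  linarith

lemma freq_of_mem_Fset {r : ℕ} (hr : 1 ≤ r) (hmono : Monotone ψ) {x : ℝ}
    (hx : x ∈ Fset r ψ) (htend : ∀ B : ℝ, ∀ᶠ n in atTop, B < ψ n) :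
    ∃ᶠ k in atTop, ψ (k+1) ≤ (cfa (k+1) x : ℝ) := by
  rw [frequently_atTop]
  intro K
  set B : ℕ := (Finset.range K).sup (fun i => cfa (i+1) x) with hB
  obtain ⟨n₀, hn₀⟩ := eventually_atTop.mp (htend B)
  obtain ⟨n, hn, ksel, hkmono, hkrange, hkpsi⟩ := hx.2 (max n₀ 1)
  set j := ksel ⟨0, hr⟩ with hj
  obtain ⟨hj1, hjn⟩ := hkrange ⟨0, hr⟩
  have hψn : ψ n ≤ (cfa j x : ℝ) := hkpsi ⟨0, hr⟩
  have hKj : K + 1 ≤ j := by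
    by_contra h
    push_neg at h
    have hmem : j - 1 ∈ Finset.range K := Finset.mem_range.mpr (by omega)
    have hle : cfa (j - 1 + 1) x ≤ B := Finset.le_sup (f := fun i => cfa (i+1) x) hmem
    rw [show j - 1 + 1 = j from by omega] at hle
    have hBn : (B:ℝ) < ψ n := hn₀ n (le_trans (le_max_left _ _) hn)
    have : ψ n ≤ (B:ℝ) := le_trans hψn (by exact_mod_cast hle)
    linarith
  refine ⟨j - 1, by omega, ?_⟩
  rw [show j - 1 + 1 = j from by omega]
  exact le_trans (hmono hjn) hψn

end



end Stmt18Aux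

open Stmt18Aux

theorem stmt_18 (r : ℕ) (hr : 1 ≤ r) (ψ : ℕ → ℝ) (hpos : ∀ n, 0 < ψ n)
    (hmono : Monotone ψ)
    (hB : Tendsto (fun n : ℕ => Real.log (ψ n) / n) atTop atTop)
    (hb : Tendsto (fun n : ℕ => Real.log (Real.log (ψ n)) / n) atTop atTop) :
    dimH (Fset r ψ) = 0 := by
  have htend := psi_tend hpos hB
  have hψexp := psi_exp hpos hB hb
  have hsplit : Fset r ψ ⊆ (Fset r ψ ∩ {x | Irrational x}) ∪ (Set.range ((↑) : ℚ → ℝ)) := by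
    intro x hx
    by_cases h : Irrational x
    · exact Or.inl ⟨hx, h⟩
    · exact Or.inr (not_not.mp h)
  refine le_antisymm ?_ zero_le
  refine le_trans (dimH_mono hsplit) ?_
  rw [dimH_union, dimH_countable (countable_range _)]
  simp only [max_le_iff, le_refl, and_true]
  -- suffices to bound by every positive d
  by_contra hX
  rw [not_le] at hX
  obtain ⟨d, hd0, hdX⟩ := ENNReal.lt_iff_exists_nnreal_btwn.mp hX
  have hd0' : (0:ℝ) < (d:ℝ) := by exact_mod_cast hd0
  set m : ℕ := ⌈(3:ℝ)/(d:ℝ)⌉₊ with hm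
  have hmd : 2 < (m:ℝ) * (d:ℝ) := by
    have h1 : (3:ℝ)/(d:ℝ) ≤ m := Nat.le_ceil _
    have h2 : (3:ℝ) ≤ (m:ℝ) * d := by
      rw [div_le_iff₀ hd0'] at h1
      linarith
    linarith
  have hsub : Fset r ψ ∩ {x | Irrational x} ⊆ Lset m := by
    rintro x ⟨hxF, hxI⟩
    have hfreq := freq_of_mem_Fset hr hmono hxF htend
    rw [Lset, mem_setOf_eq, frequently_atTop]
    intro N
    obtain ⟨b, hbN, _hb2, p, h0, h2, hlt⟩ := exists_good_rational hxF.1 hxI hψexp hfreq m N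
    exact ⟨b, hbN, p, h0, h2, hlt⟩
  have hmeas := hausdorff_Lset_zero hd0' m hmd
  have hle : dimH (Fset r ψ ∩ {x | Irrational x}) ≤ (d : ℝ≥0∞) :=
    le_trans (dimH_mono hsub)
      (dimH_le_of_hausdorffMeasure_ne_top (by rw [hmeas]; exact ENNReal.zero_ne_top))
  exact absurd (lt_of_le_of_lt hle hdX) (lt_irrefl _)
end
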